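/- arXiv:2404.07958 — 5 statements merged into one kernel-verified Lean document; each statement's English description precedes it below -/
import Mathlib

section
/- The number of increasing parking functions of size n equals the n-th Catalan number. -/
open Finset

noncomputable section

/-- The parking process over the first `k` cars (cars are `0,...,k-1`, i.e. cars `1,...,k`
in 1-indexed terms): returns `some occ` where `occ` maps each spot to the car parked there
(`none` meaning empty), or `none` if some car failed to park.  Car `c` drives to its
preferred spot `f c` and parks at the first free spot with index `≥ f c`, failing if
no such spot exists. -/
def parkAux {n : ℕ} (f : Fin n → Fin n) : ℕ → Option (Fin n → Option (Fin n))
  | 0 => some fun _ => none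
  | k + 1 =>
    (parkAux f k).bind fun occ =>
      if h : k < n then
        if hS : (Finset.univ.filter fun s => f ⟨k, h⟩ ≤ s ∧ occ s = none).Nonempty then
          some (Function.update occ
            ((Finset.univ.filter fun s => f ⟨k, h⟩ ≤ s ∧ occ s = none).min' hS)
            (some ⟨k, h⟩))
        else none
      else some occ

/-- All `n` cars park successfully. -/
def AllPark {n : ℕ} (f : Fin n → Fin n) : Prop := (parkAux f n).isSome

/-- `f` is a parking function: for every `i ∈ [n]`, at least `i` cars prefer
the first `i` spots.  (Here `i : Fin n` denotes the `(i+1)`-st spot, 0-indexed.) -/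
def IsParkingFunction {n : ℕ} (f : Fin n → Fin n) : Prop :=
  ∀ i : Fin n, i.val + 1 ≤ (Finset.univ.filter fun j => f j ≤ i).card

/-- `ρ` is the parking permutation of `f`: after all cars have parked,
spot `i` is occupied by car `ρ i`. -/
def IsParkingPerm {n : ℕ} (f : Fin n → Fin n) (ρ : Equiv.Perm (Fin n)) : Prop :=
  parkAux f n = some fun i => some (ρ i)

/-- `π` contains `σ` as a pattern. -/
def ContainsPattern {n m : ℕ} (π : Equiv.Perm (Fin n)) (σ : Equiv.Perm (Fin m)) : Prop :=
  ∃ g : Fin m → Fin n, StrictMono g ∧ ∀ a b : Fin m, σ a < σ b ↔ π (g a) < π (g b)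

/-- `ρ` avoids every pattern in the list `pats`. -/
def AvoidsAll {n : ℕ} (ρ : Equiv.Perm (Fin n)) (pats : List (Equiv.Perm (Fin 3))) : Prop :=
  ∀ σ ∈ pats, ¬ ContainsPattern ρ σ

/-- The number of parking functions of size `n` whose parking permutation avoids
all patterns in `pats`. -/
def pk (n : ℕ) (pats : List (Equiv.Perm (Fin 3))) : ℕ :=
  Nat.card {f : Fin n → Fin n // IsParkingFunction f ∧
    ∃ ρ : Equiv.Perm (Fin n), IsParkingPerm f ρ ∧ AvoidsAll ρ pats}

def p123 : Equiv.Perm (Fin 3) := Equiv.ofBijective ![0, 1, 2] (by decide)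
def p132 : Equiv.Perm (Fin 3) := Equiv.ofBijective ![0, 2, 1] (by decide)
def p213 : Equiv.Perm (Fin 3) := Equiv.ofBijective ![1, 0, 2] (by decide)
def p231 : Equiv.Perm (Fin 3) := Equiv.ofBijective ![1, 2, 0] (by decide)
def p312 : Equiv.Perm (Fin 3) := Equiv.ofBijective ![2, 0, 1] (by decide)
def p321 : Equiv.Perm (Fin 3) := Equiv.ofBijective ![2, 1, 0] (by decide)

attribute [local instance] Classical.propDecidable

/-- Monotone lattice-path functions: monotone `f : Fin m → ℕ` with `f i ≤ i`. -/
def SS (m : ℕ) : Type := {f : Fin m → ℕ // Monotone f ∧ ∀ i : Fin m, f i ≤ i.val}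

instance SS.finite (m : ℕ) : Finite (SS m) := by
  apply Finite.of_injective (fun f : SS m => (fun i : Fin m => (⟨f.1 i, by
    have := f.2.2 i; omega⟩ : Fin (m + 1))))
  intro a b hab
  apply Subtype.ext; funext i
  have := congrFun hab i
  simpa [Fin.mk.injEq] using this

def kP {n : ℕ} (f : SS (n + 1)) : ℕ → Prop :=
  fun j => j = n ∨ ∃ h : j < n, f.1 ⟨j + 1, by omega⟩ = j + 1

lemma kP_ex {n : ℕ} (f : SS (n + 1)) : ∃ j, kP f j := ⟨n, Or.inl rfl⟩

/-- The "first-return" index for the decomposition. -/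
def kOf {n : ℕ} (f : SS (n + 1)) : ℕ := Nat.find (kP_ex f)

lemma kOf_le {n : ℕ} (f : SS (n + 1)) : kOf f ≤ n :=
  Nat.find_le (Or.inl rfl)

lemma kOf_spec {n : ℕ} (f : SS (n + 1)) : kP f (kOf f) := Nat.find_spec (kP_ex f)

lemma kOf_min {n : ℕ} (f : SS (n + 1)) {j : ℕ} (hj : j < kOf f) : ¬ kP f j :=
  Nat.find_min (kP_ex f) hj

lemma lt_of_le_kOf {n : ℕ} (f : SS (n + 1)) {j : ℕ} (h1 : 1 ≤ j) (h2 : j ≤ kOf f) :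
    f.1 ⟨j, by have := kOf_le f; omega⟩ < j := by
  have hk := kOf_le f
  have hmin := kOf_min f (j := j - 1) (by omega)
  unfold kP at hmin
  push_neg at hmin
  have h3 : j - 1 < n := by omega
  have h5 : f.1 ⟨j - 1 + 1, by omega⟩ ≠ j - 1 + 1 := hmin.2 h3
  have h6 : (⟨j - 1 + 1, by omega⟩ : Fin (n + 1)) = ⟨j, by omega⟩ := by
    apply Fin.ext; simp; omega
  rw [h6] at h5
  have h7 := f.2.2 ⟨j, by omega⟩
  simp only [Fin.val_mk] at h7 ⊢
  omega

lemma kOf_eq_at {n : ℕ} (f : SS (n + 1)) (h : kOf f < n) :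
    f.1 ⟨kOf f + 1, by omega⟩ = kOf f + 1 := by
  rcases kOf_spec f with h1 | ⟨h1, h2⟩
  · omega
  · exact h2

/-- Forward map of the first-return decomposition. -/
def fwd {n : ℕ} (f : SS (n + 1)) : Σ k : Fin (n + 1), SS k.val × SS (n - k.val) :=
  ⟨⟨kOf f, by have := kOf_le f; omega⟩,
    ⟨fun j => f.1 ⟨j.val + 1, by
        have := kOf_le f; have hj : j.val < kOf f := j.isLt; omega⟩, by
      intro a b hab
      have hab' : a.val ≤ b.val := hab
      apply f.2.1
      show _ ≤ _
      simp only [Fin.mk_le_mk]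
      omega, by
      intro j
      have hj : j.val < kOf f := j.isLt
      have := lt_of_le_kOf f (j := j.val + 1) (by omega) (by omega)
      simp only [Fin.val_mk] at this ⊢
      omega⟩,
    ⟨fun j => f.1 ⟨kOf f + 1 + j.val, by
        have := kOf_le f; have hj : j.val < n - kOf f := j.isLt; omega⟩ - (kOf f + 1), by
      intro a b hab
      have hab' : a.val ≤ b.val := hab
      have := f.2.1 (show (⟨kOf f + 1 + a.val, by
          have := kOf_le f; have hj : a.val < n - kOf f := a.isLt; omega⟩ : Fin (n + 1)) ≤
        ⟨kOf f + 1 + b.val, by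
          have := kOf_le f; have hj : b.val < n - kOf f := b.isLt; omega⟩ by
        simp only [Fin.mk_le_mk]; omega)
      simp only
      omega, by
      intro j
      have hj : j.val < n - kOf f := j.isLt
      have := f.2.2 ⟨kOf f + 1 + j.val, by have := kOf_le f; omega⟩
      simp only [Fin.val_mk] at this ⊢
      omega⟩⟩

/-- Backward map of the first-return decomposition. -/
def bwd {n : ℕ} (x : Σ k : Fin (n + 1), SS k.val × SS (n - k.val)) : SS (n + 1) :=
  ⟨fun i => if h0 : i.val = 0 then 0 else if h2 : i.val ≤ x.1.val then
      x.2.1.1 ⟨i.val - 1, by omega⟩ else x.1.val + 1 + x.2.2.1 ⟨i.val - (x.1.val + 1), by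
        have := i.isLt; omega⟩, by
    obtain ⟨k, g, h⟩ := x
    intro a b hab
    have hab' : a.val ≤ b.val := hab
    by_cases ha0 : a.val = 0
    · by_cases hb0 : b.val = 0
      · simp [ha0, hb0]
      · simp only [ha0, hb0, dite_true, dite_false]
        simp
    · have hb0 : ¬ b.val = 0 := by omega
      simp only [ha0, hb0, dite_false]
      by_cases ha2 : a.val ≤ k.val
      · by_cases hb2 : b.val ≤ k.val
        · simp only [ha2, hb2, dite_true]
          exact g.2.1 (show (⟨a.val - 1, by omega⟩ : Fin k.val) ≤ ⟨b.val - 1, by omega⟩ by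
            simp only [Fin.mk_le_mk]; omega)
        · simp only [ha2, hb2, dite_true, dite_false]
          have := g.2.2 ⟨a.val - 1, by omega⟩
          simp only [Fin.val_mk] at this
          omega
      · have hb2 : ¬ b.val ≤ k.val := by omega
        simp only [ha2, hb2, dite_false]
        have := h.2.1 (show (⟨a.val - (k.val + 1), by have := a.isLt; omega⟩ : Fin (n - k.val)) ≤
            ⟨b.val - (k.val + 1), by have := b.isLt; omega⟩ by
          simp only [Fin.mk_le_mk]; omega)
        omega, by
    obtain ⟨k, g, h⟩ := x
    intro i
    by_cases h0 : i.val = 0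
    · simp [h0]
    · by_cases h2 : i.val ≤ k.val
      · simp only [h0, h2, dite_true, dite_false]
        have := g.2.2 ⟨i.val - 1, by omega⟩
        simp only [Fin.val_mk] at this
        omega
      · simp only [h0, h2, dite_false]
        have := h.2.2 ⟨i.val - (k.val + 1), by have := i.isLt; omega⟩
        simp only [Fin.val_mk] at this
        omega⟩


lemma bwd_val_zero {n : ℕ} (x : Σ k : Fin (n + 1), SS k.val × SS (n - k.val)) (i : Fin (n + 1))
    (h0 : i.val = 0) : (bwd x).1 i = 0 := by
  show dite _ _ _ = 0
  rw [dif_pos h0]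

lemma bwd_val_g {n : ℕ} (x : Σ k : Fin (n + 1), SS k.val × SS (n - k.val)) (i : Fin (n + 1))
    (h0 : ¬ i.val = 0) (h2 : i.val ≤ x.1.val) :
    (bwd x).1 i = x.2.1.1 ⟨i.val - 1, by omega⟩ := by
  show dite _ _ _ = _
  rw [dif_neg h0, dif_pos h2]

lemma bwd_val_h {n : ℕ} (x : Σ k : Fin (n + 1), SS k.val × SS (n - k.val)) (i : Fin (n + 1))
    (h2 : x.1.val < i.val) :
    (bwd x).1 i = x.1.val + 1 + x.2.2.1 ⟨i.val - (x.1.val + 1), by have := i.isLt; omega⟩ := by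
  show dite _ _ _ = _
  rw [dif_neg (by omega), dif_neg (by omega)]

lemma bwd_fwd {n : ℕ} (f : SS (n + 1)) : bwd (fwd f) = f := by
  have hk : (fwd f).1.val = kOf f := rfl
  have hkn := kOf_le f
  apply Subtype.ext; funext i
  by_cases h0 : i.val = 0
  · rw [bwd_val_zero _ _ h0]
    have := f.2.2 i
    omega
  · by_cases h2 : i.val ≤ kOf f
    · rw [bwd_val_g _ _ h0 h2]
      show f.1 ⟨(i.val - 1) + 1, _⟩ = f.1 i
      have he : (⟨(i.val - 1) + 1, by omega⟩ : Fin (n + 1)) = i := Fin.ext (by simp only [Fin.val_mk]; omega)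
      rw [he]
    · rw [bwd_val_h _ _ (by omega)]
      show kOf f + 1 + (f.1 ⟨kOf f + 1 + (i.val - (kOf f + 1)), _⟩ - (kOf f + 1)) = f.1 i
      have hie : (⟨kOf f + 1 + (i.val - (kOf f + 1)), by have := i.isLt; omega⟩ : Fin (n + 1)) = i := by
        apply Fin.ext; simp only [Fin.val_mk]; omega
      rw [hie]
      have hkltn : kOf f < n := by have := i.isLt; omega
      have h3 := kOf_eq_at f hkltn
      have h4 := f.2.1 (show (⟨kOf f + 1, by omega⟩ : Fin (n + 1)) ≤ i by
        simp only [Fin.le_def, Fin.val_mk]; omega)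
      omega

lemma kOf_bwd {n : ℕ} (x : Σ k : Fin (n + 1), SS k.val × SS (n - k.val)) :
    kOf (bwd x) = x.1.val := by
  have hkn : x.1.val ≤ n := by have := x.1.isLt; omega
  have hspec : kP (bwd x) x.1.val := by
    by_cases hxn : x.1.val = n
    · exact Or.inl hxn
    · refine Or.inr ⟨by omega, ?_⟩
      rw [bwd_val_h x ⟨x.1.val + 1, by omega⟩ (by simp)]
      have h0 := x.2.2.2.2 ⟨x.1.val + 1 - (x.1.val + 1), by omega⟩
      simp only [Fin.val_mk] at h0 ⊢
      omega
  have hmin : ∀ j < x.1.val, ¬ kP (bwd x) j := by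
    intro j hj hP
    rcases hP with h1 | ⟨h1, h2⟩
    · omega
    · rw [bwd_val_g x ⟨j + 1, by omega⟩ (by simp) (by simp only [Fin.val_mk]; omega)] at h2
      have := x.2.1.2.2 ⟨j + 1 - 1, by omega⟩
      simp only [Fin.val_mk] at this h2
      omega
  exact (Nat.find_eq_iff (kP_ex (bwd x))).2 ⟨hspec, hmin⟩


lemma sigma_ext {n : ℕ} (a b : Σ k : Fin (n + 1), SS k.val × SS (n - k.val))
    (h1 : a.1.val = b.1.val)
    (hg : ∀ (j : ℕ) (hj : j < a.1.val) (hj' : j < b.1.val), a.2.1.1 ⟨j, hj⟩ = b.2.1.1 ⟨j, hj'⟩)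
    (hh : ∀ (j : ℕ) (hj : j < n - a.1.val) (hj' : j < n - b.1.val),
      a.2.2.1 ⟨j, hj⟩ = b.2.2.1 ⟨j, hj'⟩) : a = b := by
  obtain ⟨⟨k, hk⟩, g, h⟩ := a
  obtain ⟨⟨k', hk'⟩, g', h'⟩ := b
  simp only [Fin.val_mk] at h1
  subst h1
  simp only [Sigma.mk.inj_iff, heq_eq_eq, Prod.mk.injEq]
  refine ⟨trivial, Subtype.ext ?_, Subtype.ext ?_⟩
  · funext j
    exact hg j.val j.isLt j.isLt
  · funext j
    exact hh j.val j.isLt j.isLt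

lemma fwd_bwd {n : ℕ} (x : Σ k : Fin (n + 1), SS k.val × SS (n - k.val)) : fwd (bwd x) = x := by
  have hk : kOf (bwd x) = x.1.val := kOf_bwd x
  have hkn : x.1.val ≤ n := by have := x.1.isLt; omega
  apply sigma_ext
  · show kOf (bwd x) = x.1.val
    exact hk
  · intro j hj hj'
    have hjk : j < kOf (bwd x) := hj
    show (bwd x).1 ⟨j + 1, by omega⟩ = x.2.1.1 ⟨j, hj'⟩
    rw [bwd_val_g x ⟨j + 1, by omega⟩ (by simp) (by simp only [Fin.val_mk]; omega)]
    congr 1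
  · intro j hj hj'
    have hjk : j < n - kOf (bwd x) := hj
    show (bwd x).1 ⟨kOf (bwd x) + 1 + j, by omega⟩ - (kOf (bwd x) + 1) = x.2.2.1 ⟨j, hj'⟩
    rw [bwd_val_h x ⟨kOf (bwd x) + 1 + j, by omega⟩ (by simp only [Fin.val_mk]; omega)]
    have he : (⟨(⟨kOf (bwd x) + 1 + j, by omega⟩ : Fin (n + 1)).val - (x.1.val + 1), by
        have : kOf (bwd x) + 1 + j < n + 1 := by omega
        simp only [Fin.val_mk]; omega⟩ : Fin (n - x.1.val)) = ⟨j, hj'⟩ := by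
      apply Fin.ext
      simp only [Fin.val_mk]
      omega
    rw [he]
    omega

def decompEquiv (n : ℕ) : SS (n + 1) ≃ Σ k : Fin (n + 1), SS k.val × SS (n - k.val) :=
  ⟨fwd, bwd, bwd_fwd, fwd_bwd⟩

lemma cardSS : ∀ n, Nat.card (SS n) = catalan n := by
  intro n
  induction n using Nat.strong_induction_on with
  | _ n ih =>
    match n with
    | 0 =>
      have : Unique (SS 0) :=
        ⟨⟨⟨fun i => i.elim0, fun a => a.elim0, fun i => i.elim0⟩⟩, by
          intro a; apply Subtype.ext; funext i; exact i.elim0⟩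
      rw [Nat.card_unique, catalan_zero]
    | n + 1 =>
      rw [Nat.card_congr (decompEquiv n)]
      letI : ∀ m, Fintype (SS m) := fun m => Fintype.ofFinite _
      rw [Nat.card_eq_fintype_card, Fintype.card_sigma, catalan_succ]
      apply Finset.sum_congr rfl
      intro k _
      rw [Fintype.card_prod, ← Nat.card_eq_fintype_card, ← Nat.card_eq_fintype_card,
        ih k.val (by omega), ih (n - k.val) (by omega)]

def keyEquiv (n : ℕ) :
    {f : Fin n → Fin n // IsParkingFunction f ∧ Monotone f} ≃ SS n where
  toFun f := ⟨fun i => (f.1 i).val, fun a b hab => f.2.2 hab, by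
    intro i
    by_contra hcon
    push_neg at hcon
    have hsub : (Finset.univ.filter fun j => f.1 j ≤ i) ⊆ Finset.Iio i := by
      intro j hj
      simp only [Finset.mem_filter, Finset.mem_univ, true_and] at hj
      rw [Finset.mem_Iio]
      by_contra hji
      push_neg at hji
      have := f.2.2 hji
      rw [Fin.le_def] at this hj hji
      omega
    have hcard := Finset.card_le_card hsub
    rw [Fin.card_Iio] at hcard
    have := f.2.1 i
    omega⟩
  invFun g := ⟨fun i => ⟨g.1 i, by have := g.2.2 i; have := i.isLt; omega⟩, by
    constructor
    · intro i
      have hsub : Finset.Iic i ⊆ (Finset.univ.filter fun j =>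
          (⟨g.1 j, by have := g.2.2 j; have := j.isLt; omega⟩ : Fin n) ≤ i) := by
        intro j hj
        rw [Finset.mem_Iic] at hj
        simp only [Finset.mem_filter, Finset.mem_univ, true_and]
        rw [Fin.le_def] at hj ⊢
        have := g.2.2 j
        simp only [Fin.val_mk]
        omega
      refine le_trans ?_ (Finset.card_le_card hsub)
      rw [Fin.card_Iic]
    · intro a b hab
      rw [Fin.le_def]
      simp only [Fin.val_mk]
      exact g.2.1 hab⟩
  left_inv f := by apply Subtype.ext; funext i; apply Fin.ext; rfl
  right_inv g := by apply Subtype.ext; funext i; rfl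


/-- The number of increasing parking functions of size `n` equals the `n`-th Catalan number. -/
theorem stmt1 (n : ℕ) :
    Nat.card {f : Fin n → Fin n // IsParkingFunction f ∧ Monotone f} = catalan n := by
  rw [Nat.card_congr (keyEquiv n), cardSS]
end
end

section
/- For any permutation ρ of {1,...,n}, the number of parking functions f of size n whose parking permutation equals ρ is ∏_{i=1}^n ℓ(i,ρ), where ℓ(i,ρ) = max{ℓ : ρ(j) ≤ ρ(i) for all i−ℓ+1 ≤ j ≤ i}. -/
open Finset

noncomputable section

/-- `ell ρ i` is the largest `ℓ` such that `ρ j ≤ ρ i` for all `i - ℓ + 1 ≤ j ≤ i`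
(in 1-indexed terms). -/
def ell {n : ℕ} (ρ : Equiv.Perm (Fin n)) (i : Fin n) : ℕ :=
  ((Finset.Icc 1 (i.val + 1)).filter fun l =>
    ∀ j : Fin n, i.val + 1 - l ≤ j.val → j ≤ i → ρ j ≤ ρ i).sup id


/-- The set of allowed preferences for the car that ends up at spot `i`. -/
def Slot {n : ℕ} (ρ : Equiv.Perm (Fin n)) (i : Fin n) : Finset (Fin n) :=
  Finset.univ.filter fun j => j ≤ i ∧ ∀ m : Fin n, j ≤ m → m < i → ρ m < ρ i

lemma parkAux_inv {n : ℕ} (f : Fin n → Fin n) :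
    ∀ k, ∀ occ, parkAux f k = some occ →
      (∀ m c, occ m = some c → c.val < k) ∧
      (∀ c : Fin n, c.val < k → ∃ s, occ s = some c ∧ f c ≤ s ∧
        ∀ m, f c ≤ m → m < s → ∃ c', occ m = some c' ∧ c'.val < c.val) := by
  intro k
  induction k with
  | zero =>
    intro occ hocc
    rw [parkAux, Option.some.injEq] at hocc
    subst hocc
    exact ⟨fun m c h => by simp at h, fun c h => by omega⟩
  | succ k ih =>
    intro occ hocc
    rw [parkAux] at hocc
    obtain ⟨occ₀, hocc₀, hg⟩ := Option.bind_eq_some_iff.mp hocc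
    obtain ⟨ih1, ih2⟩ := ih occ₀ hocc₀
    by_cases h : k < n
    · rw [dif_pos h] at hg
      by_cases hS : (Finset.univ.filter fun s => f ⟨k, h⟩ ≤ s ∧ occ₀ s = none).Nonempty
      · rw [dif_pos hS, Option.some.injEq] at hg
        set s₀ := (Finset.univ.filter fun s => f ⟨k, h⟩ ≤ s ∧ occ₀ s = none).min' hS with hs₀
        have hmem := (Finset.univ.filter fun s => f ⟨k, h⟩ ≤ s ∧ occ₀ s = none).min'_mem hS
        rw [Finset.mem_filter] at hmem
        obtain ⟨-, hfs₀, hempty⟩ := hmem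
        subst hg
        constructor
        · intro m c hmc
          by_cases hm : m = s₀
          · subst hm
            rw [Function.update_self, Option.some.injEq] at hmc
            subst hmc
            exact Nat.lt_succ_self k
          · rw [Function.update_of_ne hm] at hmc
            exact Nat.lt_succ_of_lt (ih1 m c hmc)
        · intro c hc
          rcases Nat.lt_succ_iff_lt_or_eq.mp hc with hc | hc
          · obtain ⟨s, hs1, hs2, hs3⟩ := ih2 c hc
            have hss₀ : s ≠ s₀ := fun he => by rw [he, hempty] at hs1; exact nomatch hs1
            refine ⟨s, by rw [Function.update_of_ne hss₀]; exact hs1, hs2, fun m hm1 hm2 => ?_⟩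
            obtain ⟨c', hc'1, hc'2⟩ := hs3 m hm1 hm2
            have hms₀ : m ≠ s₀ := fun he => by rw [he, hempty] at hc'1; exact nomatch hc'1
            exact ⟨c', by rw [Function.update_of_ne hms₀]; exact hc'1, hc'2⟩
          · have hck : c = ⟨k, h⟩ := Fin.ext hc
            subst hck
            refine ⟨s₀, by rw [Function.update_self], hfs₀, fun m hm1 hm2 => ?_⟩
            have hms₀ : m ≠ s₀ := Fin.ne_of_lt hm2
            rcases ho : occ₀ m with _ | c'
            · exfalso
              have : m ∈ Finset.univ.filter fun s => f ⟨k, h⟩ ≤ s ∧ occ₀ s = none :=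
                Finset.mem_filter.mpr ⟨Finset.mem_univ _, hm1, ho⟩
              exact absurd (Finset.min'_le _ _ this) (not_le.mpr hm2)
            · exact ⟨c', by rw [Function.update_of_ne hms₀]; exact ho, ih1 m c' ho⟩
      · rw [dif_neg hS] at hg
        exact nomatch hg
    · rw [dif_neg h, Option.some.injEq] at hg
      subst hg
      refine ⟨fun m c hmc => Nat.lt_succ_of_lt (ih1 m c hmc), fun c hc => ih2 c ?_⟩
      exact lt_of_lt_of_le c.isLt (not_lt.mp h)


lemma parkAux_of_cond {n : ℕ} (f : Fin n → Fin n) (ρ : Equiv.Perm (Fin n))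
    (hc : ∀ i : Fin n, f (ρ i) ∈ Slot ρ i) :
    ∀ k, k ≤ n → parkAux f k =
      some (fun i => if (ρ i).val < k then some (ρ i) else none) := by
  intro k
  induction k with
  | zero =>
    intro _
    rw [parkAux]
    simp
  | succ k ih =>
    intro hk
    have hkn : k < n := hk
    rw [parkAux, ih (le_of_lt hkn), Option.bind_some, dif_pos hkn]
    set occ₀ : Fin n → Option (Fin n) := fun i => if (ρ i).val < k then some (ρ i) else none
      with hocc₀
    set i₀ : Fin n := ρ.symm ⟨k, hkn⟩ with hi₀
    have hρi₀ : ρ i₀ = ⟨k, hkn⟩ := ρ.apply_symm_apply _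
    obtain ⟨hfi₀, hslot⟩ : f (ρ i₀) ≤ i₀ ∧ ∀ m : Fin n, f (ρ i₀) ≤ m → m < i₀ → ρ m < ρ i₀ := by
      have := hc i₀
      rw [Slot, Finset.mem_filter] at this
      exact this.2
    have hi₀mem : i₀ ∈ Finset.univ.filter fun s => f ⟨k, hkn⟩ ≤ s ∧ occ₀ s = none := by
      refine Finset.mem_filter.mpr ⟨Finset.mem_univ _, ?_, ?_⟩
      · rw [← hρi₀]; exact hfi₀
      · rw [hocc₀]; simp only [hρi₀]; rw [if_neg (lt_irrefl k)]
    have hS : (Finset.univ.filter fun s => f ⟨k, hkn⟩ ≤ s ∧ occ₀ s = none).Nonempty :=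
      ⟨i₀, hi₀mem⟩
    rw [dif_pos hS, Option.some.injEq]
    have hmin : (Finset.univ.filter fun s => f ⟨k, hkn⟩ ≤ s ∧ occ₀ s = none).min' hS = i₀ := by
      refine le_antisymm (Finset.min'_le _ _ hi₀mem) (Finset.le_min' _ _ _ fun s hs => ?_)
      rw [Finset.mem_filter] at hs
      obtain ⟨-, hfs, hnone⟩ := hs
      by_contra hlt
      push_neg at hlt
      have : ρ s < ρ i₀ := hslot s (by rw [hρi₀]; exact hfs) hlt
      rw [hρi₀] at this
      have hv : (ρ s).val < k := this
      rw [hocc₀] at hnone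
      simp only [hv, if_true] at hnone
      exact nomatch hnone
    rw [hmin]
    funext i
    by_cases hi : i = i₀
    · subst hi
      rw [Function.update_self, if_pos (by rw [hρi₀]; exact Nat.lt_succ_self k)]
      rw [hρi₀]
    · rw [Function.update_of_ne hi, hocc₀]
      have hne : (ρ i).val ≠ k := fun he => hi (by
        apply ρ.injective
        rw [hρi₀]
        exact Fin.ext he)
      simp only []
      by_cases hlt : (ρ i).val < k
      · rw [if_pos hlt, if_pos (Nat.lt_succ_of_lt hlt)]
      · rw [if_neg hlt, if_neg (by omega)]


lemma cond_iff {n : ℕ} (f : Fin n → Fin n) (ρ : Equiv.Perm (Fin n)) :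
    (IsParkingFunction f ∧ IsParkingPerm f ρ) ↔ ∀ i : Fin n, f (ρ i) ∈ Slot ρ i := by
  constructor
  · rintro ⟨-, hpp⟩ i
    obtain ⟨-, h2⟩ := parkAux_inv f n _ hpp
    obtain ⟨s, hs1, hs2, hs3⟩ := h2 (ρ i) (ρ i).isLt
    rw [Option.some.injEq] at hs1
    have hsi : s = i := ρ.injective hs1
    subst hsi
    refine Finset.mem_filter.mpr ⟨Finset.mem_univ _, hs2, fun m hm1 hm2 => ?_⟩
    obtain ⟨c', hc'1, hc'2⟩ := hs3 m hm1 hm2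
    rw [Option.some.injEq] at hc'1
    rw [Fin.lt_def, hc'1]
    exact hc'2
  · intro hc
    constructor
    · intro i
      have hsub : (Finset.Iic i).image ρ ⊆ Finset.univ.filter fun j => f j ≤ i := by
        intro x hx
        obtain ⟨m, hm, rfl⟩ := Finset.mem_image.mp hx
        rw [Finset.mem_Iic] at hm
        have := (Finset.mem_filter.mp (hc m)).2.1
        exact Finset.mem_filter.mpr ⟨Finset.mem_univ _, le_trans this hm⟩
      calc i.val + 1 = (Finset.Iic i).card := by rw [Fin.card_Iic]
        _ = ((Finset.Iic i).image ρ).card :=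
            (Finset.card_image_of_injective _ ρ.injective).symm
        _ ≤ _ := Finset.card_le_card hsub
    · rw [IsParkingPerm, parkAux_of_cond f ρ hc n le_rfl]
      congr 1
      funext i
      rw [if_pos (ρ i).isLt]


lemma card_Slot {n : ℕ} (ρ : Equiv.Perm (Fin n)) (i : Fin n) :
    (Slot ρ i).card = ell ρ i := by
  classical
  set P : ℕ → Prop := fun l => ∀ j : Fin n, i.val + 1 - l ≤ j.val → j ≤ i → ρ j ≤ ρ i with hP
  set L := ell ρ i with hL
  have hne : ((Finset.Icc 1 (i.val + 1)).filter P).Nonempty := by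
    refine ⟨1, Finset.mem_filter.mpr ⟨Finset.mem_Icc.mpr ⟨le_rfl, by omega⟩, ?_⟩⟩
    intro j hj hj'
    have hij : j = i := le_antisymm hj' (by rw [Fin.le_def]; omega)
    rw [hij]
  obtain ⟨b, hb, hbL⟩ := Finset.exists_mem_eq_sup _ hne id
  rw [Finset.mem_filter, Finset.mem_Icc] at hb
  have hLb : L = b := hbL
  have hL1 : 1 ≤ L := hLb ▸ hb.1.1
  have hLi : L ≤ i.val + 1 := hLb ▸ hb.1.2
  have hQL : P L := hLb ▸ hb.2
  have hmem : ∀ j : Fin n, j ∈ Slot ρ i ↔ i.val + 1 - L ≤ j.val ∧ j.val ≤ i.val := by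
    intro j
    simp only [Slot, Finset.mem_filter, Finset.mem_univ, true_and]
    constructor
    · rintro ⟨hji, hcond⟩
      have hQ : P (i.val + 1 - j.val) := by
        intro m hm hm'
        rcases eq_or_lt_of_le hm' with h | h
        · rw [h]
        · have hji' : j.val ≤ i.val := hji
          exact le_of_lt (hcond m (by rw [Fin.le_def]; omega) h)
      have hle : i.val + 1 - j.val ≤ L := by
        refine Finset.le_sup (f := id) (Finset.mem_filter.mpr ⟨Finset.mem_Icc.mpr ⟨?_, ?_⟩, hQ⟩)
        · have : j.val ≤ i.val := hji
          omega
        · omega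
      have : j.val ≤ i.val := hji
      omega
    · rintro ⟨h1, h2⟩
      refine ⟨h2, fun m hm hm' => ?_⟩
      have := hQL m (by have : j.val ≤ m.val := hm; omega) (le_of_lt hm')
      exact lt_of_le_of_ne this fun he => absurd (ρ.injective he) (Fin.ne_of_lt hm')
  have himg : (Slot ρ i).image Fin.val = Finset.Icc (i.val + 1 - L) i.val := by
    ext x
    simp only [Finset.mem_image, Finset.mem_Icc]
    constructor
    · rintro ⟨j, hj, rfl⟩; exact (hmem j).mp hj
    · rintro ⟨h1, h2⟩
      have hx : x < n := lt_of_le_of_lt h2 i.isLt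
      exact ⟨⟨x, hx⟩, (hmem ⟨x, hx⟩).mpr ⟨h1, h2⟩, rfl⟩
  have := congrArg Finset.card himg
  rw [Finset.card_image_of_injective _ Fin.val_injective, Nat.card_Icc] at this
  omega


/-- For any permutation `ρ` of `[n]`, the number of parking functions `f` of size `n`
whose parking permutation equals `ρ` is `∏ i, ell ρ i`. -/
theorem stmt2 (n : ℕ) (ρ : Equiv.Perm (Fin n)) :
    Nat.card {f : Fin n → Fin n // IsParkingFunction f ∧ IsParkingPerm f ρ} =
      ∏ i : Fin n, ell ρ i := by
  have e1 : {f : Fin n → Fin n // IsParkingFunction f ∧ IsParkingPerm f ρ} ≃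
      {f : Fin n → Fin n // ∀ i : Fin n, f (ρ i) ∈ Slot ρ i} :=
    Equiv.subtypeEquivRight fun f => cond_iff f ρ
  have e2 : {f : Fin n → Fin n // ∀ i : Fin n, f (ρ i) ∈ Slot ρ i} ≃
      {g : Fin n → Fin n // ∀ i : Fin n, g i ∈ Slot ρ i} :=
    { toFun := fun ⟨f, hf⟩ => ⟨f ∘ ρ, hf⟩
      invFun := fun ⟨g, hg⟩ => ⟨g ∘ ρ.symm, fun i => by simpa using hg i⟩
      left_inv := fun ⟨f, hf⟩ => by ext x; simp
      right_inv := fun ⟨g, hg⟩ => by ext x; simp }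
  have e3 : {g : Fin n → Fin n // ∀ i : Fin n, g i ∈ Slot ρ i} ≃
      ∀ i : Fin n, {x // x ∈ Slot ρ i} := Equiv.subtypePiEquivPi
  rw [Nat.card_congr ((e1.trans e2).trans e3), Nat.card_pi]
  exact Finset.prod_congr rfl fun i _ => by
    rw [Nat.card_eq_fintype_card, Fintype.card_coe, card_Slot]
end
end

section
/- For n ≥ 2, the number of parking functions of size n whose parking permutation avoids all of 123, 132, 231, 312 equals n + 1. -/
open Finset

noncomputable section

namespace Stmt4Aux

variable {n : ℕ}

lemma min'_eq {α} [LinearOrder α] (S : Finset α) (hS : S.Nonempty) (x : α) (hx : x ∈ S)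
    (h : ∀ y ∈ S, x ≤ y) : S.min' hS = x :=
  le_antisymm (Finset.min'_le S x hx) (Finset.le_min' S hS x h)

/-- the function whose parking permutation is the decreasing permutation -/
def fA (n : ℕ) : Fin n → Fin n := Fin.rev

/-- the functions whose parking permutation is `ρB` -/
def fB (j : Fin n) : Fin n → Fin n := fun c =>
  if c.val = n - 1 then j else ⟨n - 2 - c.val, by have := c.pos; omega⟩

def occA (n k : ℕ) : Fin n → Option (Fin n) := fun s =>
  if n - k ≤ s.val then some s.rev else none

def occB (n k : ℕ) : Fin n → Option (Fin n) := fun s =>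
  if n - 1 - k ≤ s.val ∧ s.val ≤ n - 2 then
    some ⟨n - 2 - s.val, by have := s.pos; omega⟩ else none

def ρBfun (n : ℕ) : Fin n → Fin n := fun i =>
  if i.val = n - 1 then i else ⟨n - 2 - i.val, by have := i.pos; omega⟩

lemma ρBfun_invol : Function.Involutive (ρBfun n) := by
  intro i
  have h1 := i.isLt
  unfold ρBfun
  split_ifs with h2 h3
  all_goals first | rfl | (apply Fin.ext; simp only [Fin.val_mk] at *; omega)

def ρB (n : ℕ) : Equiv.Perm (Fin n) := Function.Involutive.toPerm _ (ρBfun_invol (n := n))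

@[simp] lemma ρB_apply (i : Fin n) : ρB n i = ρBfun n i := rfl

lemma ρB_val_last {x : Fin n} (hx : x.val = n - 1) : ρB n x = x := by
  simp only [ρB_apply, ρBfun]
  rw [if_pos hx]

lemma ρB_val_lt {x : Fin n} (hx : x.val ≠ n - 1) : (ρB n x).val = n - 2 - x.val := by
  simp only [ρB_apply, ρBfun]
  rw [if_neg hx]

/-- `parkAux` unfolding -/
lemma parkAux_succ (f : Fin n → Fin n) (k : ℕ) :
    parkAux f (k + 1) = (parkAux f k).bind fun occ =>
      if h : k < n then
        if hS : (Finset.univ.filter fun s => f ⟨k, h⟩ ≤ s ∧ occ s = none).Nonempty then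
          some (Function.update occ
            ((Finset.univ.filter fun s => f ⟨k, h⟩ ≤ s ∧ occ s = none).min' hS)
            (some ⟨k, h⟩))
        else none
      else some occ := rfl

lemma parkAux_isSome_mono (f : Fin n → Fin n) {k m : ℕ} (hkm : k ≤ m)
    (h : (parkAux f m).isSome) : (parkAux f k).isSome := by
  induction m with
  | zero => simpa [Nat.le_zero.mp hkm] using h
  | succ m ih =>
    rcases Nat.lt_or_ge k (m+1) with h' | h'
    · apply ih (by omega)
      rw [parkAux_succ] at h
      cases hp : parkAux f m with
      | none => rw [hp] at h; simp at h
      | some _ => simp [hp]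
    · have : k = m + 1 := by omega
      subst this; exact h

lemma parkAux_preserve (f : Fin n → Fin n) {s c : Fin n} :
    ∀ {m k : ℕ} {occ occ' : Fin n → Option (Fin n)}, k ≤ m → parkAux f k = some occ →
    parkAux f m = some occ' → occ s = some c → occ' s = some c := by
  intro m
  induction m with
  | zero =>
    intro k occ occ' hkm hk hm hs
    have : k = 0 := by omega
    subst this; rw [hk] at hm; cases hm; exact hs
  | succ m ih =>
    intro k occ occ' hkm hk hm hs
    rcases Nat.lt_or_ge k (m+1) with h' | h'
    · have hsome : (parkAux f m).isSome := by
        rw [parkAux_succ] at hm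
        cases hp : parkAux f m with
        | none => rw [hp] at hm; simp at hm
        | some _ => simp [hp]
      obtain ⟨om, hom⟩ := Option.isSome_iff_exists.mp hsome
      have hmid : om s = some c := ih (by omega) hk hom hs
      rw [parkAux_succ, hom] at hm
      simp only [Option.bind_some] at hm
      by_cases h : m < n
      · rw [dif_pos h] at hm
        by_cases hS : (Finset.univ.filter fun t => f ⟨m, h⟩ ≤ t ∧ om t = none).Nonempty
        · rw [dif_pos hS] at hm
          cases hm
          have hmem := Finset.min'_mem _ hS
          rw [Finset.mem_filter] at hmem
          rw [Function.update_apply]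
          split_ifs with he
          · exfalso; rw [he] at hmid; rw [hmid] at hmem; simp at hmem
          · exact hmid
        · rw [dif_neg hS] at hm; cases hm
      · rw [dif_neg h] at hm; cases hm; exact hmid
    · have : k = m + 1 := by omega
      subst this; rw [hk] at hm; cases hm; exact hs


lemma parkA : ∀ k, k ≤ n → parkAux (fA n) k = some (occA n k) := by
  intro k
  induction k with
  | zero =>
    intro _
    simp only [parkAux]
    congr 1
    funext s
    have hs := s.isLt
    simp only [occA]
    rw [if_neg (by omega)]
  | succ k ih =>
    intro hk
    have h : k < n := by omega
    set x : Fin n := ⟨n - 1 - k, by omega⟩ with hx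
    have hset : (Finset.univ.filter fun s => fA n ⟨k, h⟩ ≤ s ∧ occA n k s = none) = {x} := by
      ext s
      have hs := s.isLt
      simp only [Finset.mem_filter, Finset.mem_univ, true_and, Finset.mem_singleton,
        fA, occA, Fin.le_def, Fin.val_rev, Fin.ext_iff, ite_eq_right_iff, reduceCtorEq,
        imp_false, not_le, hx]
      omega
    rw [parkAux_succ, ih (by omega), Option.bind_some, dif_pos h, hset]
    rw [dif_pos (Finset.singleton_nonempty x)]
    rw [Finset.min'_singleton]
    congr 1
    funext s
    have hs := s.isLt
    rw [Function.update_apply]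
    by_cases hsx : s = x
    · rw [if_pos hsx, hsx]
      simp only [occA, hx]
      rw [if_pos (by first | omega | (simp only [Fin.val_mk]; omega))]
      congr 1
      apply Fin.ext
      simp only [Fin.val_rev, Fin.val_mk]
      omega
    · rw [if_neg hsx]
      have hv : s.val ≠ n - 1 - k := fun hh => hsx (Fin.ext (by simp [hx, hh]))
      simp only [occA]
      split_ifs with h1 h2 h2
      · rfl
      · omega
      · omega
      · rfl

lemma parkA_full (hn : 1 ≤ n) : parkAux (fA n) n = some (fun i => some (Fin.revPerm i)) := by
  rw [parkA n le_rfl]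
  congr 1
  funext s
  simp only [occA]
  rw [if_pos (by omega)]
  rfl

lemma parkB (hn : 2 ≤ n) (j : Fin n) :
    ∀ k, k ≤ n - 1 → parkAux (fB j) k = some (occB n k) := by
  intro k
  induction k with
  | zero =>
    intro _
    simp only [parkAux]
    congr 1
    funext s
    have hs := s.isLt
    simp only [occB]
    rw [if_neg (by omega)]
  | succ k ih =>
    intro hk
    have h : k < n := by omega
    set x : Fin n := ⟨n - 2 - k, by omega⟩ with hx
    have hfk : fB j ⟨k, h⟩ = x := by
      simp only [fB]
      rw [if_neg (by first | omega | (simp only [Fin.val_mk]; omega))]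
    have hxmem : x ∈ (Finset.univ.filter fun s => fB j ⟨k, h⟩ ≤ s ∧ occB n k s = none) := by
      rw [Finset.mem_filter, hfk]
      refine ⟨Finset.mem_univ x, le_rfl, ?_⟩
      simp only [occB, hx]
      rw [if_neg (by first | omega | (simp only [Fin.val_mk]; omega))]
    have hS : (Finset.univ.filter fun s => fB j ⟨k, h⟩ ≤ s ∧ occB n k s = none).Nonempty :=
      ⟨x, hxmem⟩
    have hmin : (Finset.univ.filter fun s => fB j ⟨k, h⟩ ≤ s ∧ occB n k s = none).min' hS = x := by
      apply min'_eq _ _ _ hxmem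
      intro y hy
      rw [Finset.mem_filter, hfk] at hy
      exact hy.2.1
    rw [parkAux_succ, ih (by omega), Option.bind_some, dif_pos h, dif_pos hS, hmin]
    congr 1
    funext s
    have hs := s.isLt
    rw [Function.update_apply]
    by_cases hsx : s = x
    · rw [if_pos hsx, hsx]
      simp only [occB, hx]
      rw [if_pos (by first | omega | (simp only [Fin.val_mk]; omega))]
      congr 1
      apply Fin.ext
      simp only [Fin.val_mk]
      omega
    · rw [if_neg hsx]
      have hv : s.val ≠ n - 2 - k := fun hh => hsx (Fin.ext (by simp [hx, hh]))
      simp only [occB]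
      split_ifs with h1 h2 h2
      · rfl
      · omega
      · omega
      · rfl

lemma parkB_full (hn : 2 ≤ n) (j : Fin n) :
    parkAux (fB j) n = some (fun i => some (ρB n i)) := by
  have h : n - 1 < n := by omega
  have hstep := parkAux_succ (fB (n := n) j) (n - 1)
  rw [show n - 1 + 1 = n from by omega] at hstep
  rw [hstep, parkB hn j (n - 1) le_rfl, Option.bind_some, dif_pos h]
  have hfk : fB j ⟨n - 1, h⟩ = j := by
    simp [fB]
  set x : Fin n := ⟨n - 1, h⟩ with hx
  have hxmem : x ∈ (Finset.univ.filter fun s => fB j ⟨n - 1, h⟩ ≤ s ∧ occB n (n - 1) s = none) := by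
    rw [Finset.mem_filter, hfk]
    refine ⟨Finset.mem_univ x, ?_, ?_⟩
    · rw [Fin.le_def]
      have := j.isLt
      simp only [hx, Fin.val_mk]
      omega
    · simp only [occB, hx]
      rw [if_neg (by first | omega | (simp only [Fin.val_mk]; omega))]
  have hS : (Finset.univ.filter fun s => fB j ⟨n - 1, h⟩ ≤ s ∧ occB n (n - 1) s = none).Nonempty :=
    ⟨x, hxmem⟩
  have hmin : (Finset.univ.filter fun s => fB j ⟨n - 1, h⟩ ≤ s ∧ occB n (n - 1) s = none).min' hS
      = x := by
    apply min'_eq _ _ _ hxmem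
    intro y hy
    rw [Finset.mem_filter] at hy
    have hy2 := hy.2.2
    simp only [occB] at hy2
    rw [Fin.le_def]
    have hyl := y.isLt
    simp only [hx, Fin.val_mk]
    by_contra hc
    rw [if_pos (by omega)] at hy2
    exact Option.some_ne_none _ hy2
  rw [dif_pos hS, hmin]
  congr 1
  funext s
  have hs := s.isLt
  rw [Function.update_apply]
  by_cases hsx : s = x
  · rw [if_pos hsx, hsx]
    simp [ρB_apply, ρBfun, hx]
  · have hv : s.val ≠ n - 1 := fun hh => hsx (Fin.ext (by simp [hx, hh]))
    rw [if_neg hsx]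
    simp only [occB, ρB_apply, ρBfun]
    rw [if_pos (by omega), if_neg hv]


lemma pfA (hn : 1 ≤ n) : IsParkingFunction (fA n) := by
  intro i
  have hi := i.isLt
  have hset : (Finset.univ.filter fun j => fA n j ≤ i) = Finset.Ici i.rev := by
    ext j
    have hj := j.isLt
    simp only [Finset.mem_filter, Finset.mem_univ, true_and, Finset.mem_Ici, fA,
      Fin.le_def, Fin.val_rev]
    omega
  rw [hset, Fin.card_Ici, Fin.val_rev]
  omega

lemma pfB (hn : 2 ≤ n) (j : Fin n) : IsParkingFunction (fB j) := by
  intro i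
  have hi := i.isLt
  by_cases hlast : i.val = n - 1
  · have : (Finset.univ.filter fun c => fB j c ≤ i) = Finset.univ := by
      apply Finset.filter_true_of_mem
      intro c _
      rw [Fin.le_def]
      have := (fB j c).isLt
      omega
    rw [this, Finset.card_univ, Fintype.card_fin]
    omega
  · have hsub : Finset.Icc (⟨n - 2 - i.val, by omega⟩ : Fin n) ⟨n - 2, by omega⟩ ⊆
        (Finset.univ.filter fun c => fB j c ≤ i) := by
      intro c hc
      rw [Finset.mem_Icc, Fin.le_def, Fin.le_def] at hc
      simp only [Fin.val_mk] at hc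
      rw [Finset.mem_filter]
      refine ⟨Finset.mem_univ c, ?_⟩
      rw [Fin.le_def]
      simp only [fB]
      rw [if_neg (by omega)]
      simp only [Fin.val_mk]
      omega
    have hcard := Finset.card_le_card hsub
    rw [Fin.card_Icc] at hcard
    simp only [Fin.val_mk] at hcard
    omega

lemma flip_iff {α β : Type*} [LinearOrder α] [LinearOrder β] {u v : α} {p q : β}
    (huv : u ≠ v) (hpq : p ≠ q) (h : u < v ↔ p < q) : v < u ↔ q < p := by
  constructor
  · intro hv
    rcases hpq.lt_or_gt with h2 | h2
    · exact absurd (h.mpr h2) (asymm hv)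
    · exact h2
  · intro hq
    rcases huv.lt_or_gt with h2 | h2
    · exact absurd (h.mp h2) (asymm hq)
    · exact h2

lemma contains_of_triple (ρ : Equiv.Perm (Fin n)) (σ : Equiv.Perm (Fin 3)) (a b c : Fin n)
    (hab : a < b) (hbc : b < c)
    (h01 : σ 0 < σ 1 ↔ ρ a < ρ b) (h02 : σ 0 < σ 2 ↔ ρ a < ρ c)
    (h12 : σ 1 < σ 2 ↔ ρ b < ρ c) : ContainsPattern ρ σ := by
  have hac : a < c := hab.trans hbc
  refine ⟨![a, b, c], ?_, ?_⟩
  · intro x y hxy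
    fin_cases x <;> fin_cases y <;>
      simp only [Matrix.cons_val_zero, Matrix.cons_val_one, Matrix.head_cons,
        Matrix.cons_val_two, Matrix.tail_cons] <;>
      first
        | exact hab | exact hbc | exact hac
        | exact absurd hxy (by decide)
  · have h10 : σ 1 < σ 0 ↔ ρ b < ρ a :=
      flip_iff (σ.injective.ne (by decide)) (ρ.injective.ne hab.ne) h01
    have h20 : σ 2 < σ 0 ↔ ρ c < ρ a :=
      flip_iff (σ.injective.ne (by decide)) (ρ.injective.ne hac.ne) h02
    have h21 : σ 2 < σ 1 ↔ ρ c < ρ b :=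
      flip_iff (σ.injective.ne (by decide)) (ρ.injective.ne hbc.ne) h12
    intro x y
    fin_cases x <;> fin_cases y <;>
      simp only [Matrix.cons_val_zero, Matrix.cons_val_one, Matrix.head_cons,
        Matrix.cons_val_two, Matrix.tail_cons] <;>
      first
        | exact h01 | exact h02 | exact h12 | exact h10 | exact h20 | exact h21
        | simp [lt_irrefl]

lemma avoidA (σ : Equiv.Perm (Fin 3)) (a b : Fin 3) (hab : a < b) (hσ : σ a < σ b) :
    ¬ ContainsPattern (Fin.revPerm (n := n)) σ := by
  rintro ⟨g, hg, hp⟩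
  have h1 : (g a).rev < (g b).rev := (hp a b).mp hσ
  exact absurd (hg hab) (asymm (Fin.rev_lt_rev.mp h1))

lemma ρB_lt {x y : Fin n} (hx : x.val < n - 1) (hy : y.val < n - 1) :
    (ρB n x < ρB n y ↔ y < x) := by
  have hx' := x.isLt
  have hy' := y.isLt
  simp only [ρB_apply, ρBfun, Fin.lt_def]
  rw [if_neg (by omega), if_neg (by omega)]
  simp only [Fin.val_mk]
  omega

lemma avoidB1 (hn : 2 ≤ n) (σ : Equiv.Perm (Fin 3)) (hσ : σ 0 < σ 1) :
    ¬ ContainsPattern (ρB n) σ := by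
  rintro ⟨g, hg, hp⟩
  have h01 : g 0 < g 1 := hg (by decide)
  have h12 : g 1 < g 2 := hg (by decide)
  have hg2 := (g 2).isLt
  have hg1 : (g 1).val < n - 1 := by
    have := Fin.lt_def.mp h12; omega
  have hg0 : (g 0).val < n - 1 := by
    have := Fin.lt_def.mp h01; omega
  have := (ρB_lt hg0 hg1).mp ((hp 0 1).mp hσ)
  exact absurd h01 (asymm this)

lemma avoidB312 (hn : 2 ≤ n) : ¬ ContainsPattern (ρB n) p312 := by
  rintro ⟨g, hg, hp⟩
  have h01 : g 0 < g 1 := hg (by decide)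
  have h12 : g 1 < g 2 := hg (by decide)
  have hg2 := (g 2).isLt
  have hg1 : (g 1).val < n - 1 := by
    have := Fin.lt_def.mp h12; omega
  have hg0 : (g 0).val < n - 1 := by
    have := Fin.lt_def.mp h01; omega
  have hlt12 : ρB n (g 1) < ρB n (g 2) := (hp 1 2).mp (by decide)
  by_cases hlast : (g 2).val = n - 1
  · have hρ2 : (ρB n (g 2)).val = n - 1 := by
      simp only [ρB_apply, ρBfun]
      rw [if_pos hlast]
      exact hlast
    have hρ0 : (ρB n (g 0)).val = n - 2 - (g 0).val := by
      simp only [ρB_apply, ρBfun]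
      rw [if_neg (by omega)]
    have h02 : ρB n (g 0) < ρB n (g 2) := by
      rw [Fin.lt_def, hρ0, hρ2]; omega
    have := (hp 0 2).mpr h02
    exact absurd this (by decide)
  · have hg2' : (g 2).val < n - 1 := by omega
    have := (ρB_lt hg1 hg2').mp hlt12
    exact absurd h12 (asymm this)


lemma convA (f : Fin n → Fin n)
    (hf : parkAux f n = some (fun i => some (Fin.revPerm i))) : f = fA n := by
  have key : ∀ k, k ≤ n → parkAux f k = some (occA n k) ∧
      ∀ c : Fin n, c.val < k → f c = Fin.rev c := by
    intro k
    induction k with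
    | zero =>
      intro _
      refine ⟨?_, fun c hc => absurd hc (by omega)⟩
      simp only [parkAux]
      congr 1
      funext s
      have hs := s.isLt
      simp only [occA]
      rw [if_neg (by omega)]
    | succ k ih =>
      intro hk
      have h : k < n := by omega
      obtain ⟨hpark, hfc⟩ := ih (by omega)
      have hsome : (parkAux f (k + 1)).isSome :=
        parkAux_isSome_mono f (m := n) (by omega) (by rw [hf]; rfl)
      by_cases hSne : (Finset.univ.filter fun s => f ⟨k, h⟩ ≤ s ∧ occA n k s = none).Nonempty
      swap
      · exfalso
        rw [parkAux_succ, hpark, Option.bind_some, dif_pos h, dif_neg hSne] at hsome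
        simp at hsome
      set x := (Finset.univ.filter fun s => f ⟨k, h⟩ ≤ s ∧ occA n k s = none).min' hSne with hxdef
      have hupd : parkAux f (k + 1) =
          some (Function.update (occA n k) x (some ⟨k, h⟩)) := by
        rw [parkAux_succ, hpark, Option.bind_some, dif_pos h, dif_pos hSne]
      have hfin : some (Fin.revPerm x) = some (⟨k, h⟩ : Fin n) :=
        parkAux_preserve f (s := x) (c := ⟨k, h⟩) (m := n) (k := k + 1) (by omega) hupd hf
          (by simp)
      have hxval : x.val = n - 1 - k := by
        have h2 : Fin.revPerm x = (⟨k, h⟩ : Fin n) := by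
          have := Option.some_injective _ hfin
          exact this
        have h3 : x.rev.val = k := congrArg Fin.val h2
        rw [Fin.val_rev] at h3
        have := x.isLt
        omega
      have hxS := Finset.min'_mem _ hSne
      rw [Finset.mem_filter] at hxS
      have hfk : f ⟨k, h⟩ = x := by
        by_contra hne
        have hlt : f ⟨k, h⟩ < x := lt_of_le_of_ne hxS.2.1 hne
        have hmem : f ⟨k, h⟩ ∈
            (Finset.univ.filter fun s => f ⟨k, h⟩ ≤ s ∧ occA n k s = none) := by
          rw [Finset.mem_filter]
          refine ⟨Finset.mem_univ _, le_rfl, ?_⟩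
          have hv := Fin.lt_def.mp hlt
          simp only [occA]
          rw [if_neg (by omega)]
        have := Finset.min'_le _ _ hmem
        rw [← hxdef] at this
        exact absurd hlt (not_lt.mpr this)
      constructor
      · rw [hupd]
        congr 1
        funext s
        have hs := s.isLt
        rw [Function.update_apply]
        by_cases hsx : s = x
        · rw [if_pos hsx]
          simp only [occA]
          rw [if_pos (by rw [hsx, hxval]; omega)]
          congr 1
          apply Fin.ext
          rw [Fin.val_rev, hsx, hxval]
          show k = n - (n - 1 - k + 1)
          omega
        · rw [if_neg hsx]
          have hv : s.val ≠ n - 1 - k := fun hh => hsx (Fin.ext (by rw [hh, hxval]))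
          simp only [occA]
          split_ifs with h1 h2 h2
          · rfl
          · omega
          · omega
          · rfl
      · intro c hc
        by_cases hck : c.val < k
        · exact hfc c hck
        · have hck' : c = ⟨k, h⟩ := Fin.ext (show c.val = k by omega)
          rw [hck', hfk]
          apply Fin.ext
          rw [Fin.val_rev, hxval]
          omega
  funext c
  exact (key n le_rfl).2 c c.isLt

lemma convB (hn : 2 ≤ n) (f : Fin n → Fin n)
    (hf : parkAux f n = some (fun i => some (ρB n i))) :
    f = fB (f ⟨n - 1, by omega⟩) := by
  have key : ∀ k, k ≤ n - 1 → parkAux f k = some (occB n k) ∧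
      ∀ c : Fin n, c.val < k → f c = ⟨n - 2 - c.val, by have := c.pos; omega⟩ := by
    intro k
    induction k with
    | zero =>
      intro _
      refine ⟨?_, fun c hc => absurd hc (by omega)⟩
      simp only [parkAux]
      congr 1
      funext s
      have hs := s.isLt
      simp only [occB]
      rw [if_neg (by omega)]
    | succ k ih =>
      intro hk
      have h : k < n := by omega
      obtain ⟨hpark, hfc⟩ := ih (by omega)
      have hsome : (parkAux f (k + 1)).isSome :=
        parkAux_isSome_mono f (m := n) (by omega) (by rw [hf]; rfl)
      by_cases hSne : (Finset.univ.filter fun s => f ⟨k, h⟩ ≤ s ∧ occB n k s = none).Nonempty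
      swap
      · exfalso
        rw [parkAux_succ, hpark, Option.bind_some, dif_pos h, dif_neg hSne] at hsome
        simp at hsome
      set x := (Finset.univ.filter fun s => f ⟨k, h⟩ ≤ s ∧ occB n k s = none).min' hSne with hxdef
      have hupd : parkAux f (k + 1) =
          some (Function.update (occB n k) x (some ⟨k, h⟩)) := by
        rw [parkAux_succ, hpark, Option.bind_some, dif_pos h, dif_pos hSne]
      have hfin : some (ρB n x) = some (⟨k, h⟩ : Fin n) :=
        parkAux_preserve f (s := x) (c := ⟨k, h⟩) (m := n) (k := k + 1) (by omega) hupd hf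
          (by simp)
      have hxval : x.val = n - 2 - k := by
        have h2 : ρB n x = (⟨k, h⟩ : Fin n) := Option.some_injective _ hfin
        have hx := x.isLt
        by_cases hxl : x.val = n - 1
        · exfalso
          rw [ρB_val_last hxl] at h2
          have h3 : x.val = k := congrArg Fin.val h2
          omega
        · have h3 := ρB_val_lt hxl
          rw [h2] at h3
          have h4 : k = n - 2 - x.val := h3
          omega
      have hxS := Finset.min'_mem _ hSne
      rw [Finset.mem_filter] at hxS
      have hfk : f ⟨k, h⟩ = x := by
        by_contra hne
        have hlt : f ⟨k, h⟩ < x := lt_of_le_of_ne hxS.2.1 hne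
        have hmem : f ⟨k, h⟩ ∈
            (Finset.univ.filter fun s => f ⟨k, h⟩ ≤ s ∧ occB n k s = none) := by
          rw [Finset.mem_filter]
          refine ⟨Finset.mem_univ _, le_rfl, ?_⟩
          have hv := Fin.lt_def.mp hlt
          simp only [occB]
          rw [if_neg (by omega)]
        have := Finset.min'_le _ _ hmem
        rw [← hxdef] at this
        exact absurd hlt (not_lt.mpr this)
      constructor
      · rw [hupd]
        congr 1
        funext s
        have hs := s.isLt
        rw [Function.update_apply]
        by_cases hsx : s = x
        · rw [if_pos hsx]
          simp only [occB]
          rw [if_pos (by rw [hsx, hxval]; omega)]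
          congr 1
          apply Fin.ext
          simp only [Fin.val_mk]
          rw [hsx, hxval]
          omega
        · rw [if_neg hsx]
          have hv : s.val ≠ n - 2 - k := fun hh => hsx (Fin.ext (by rw [hh, hxval]))
          simp only [occB]
          split_ifs with h1 h2 h2
          · rfl
          · omega
          · omega
          · rfl
      · intro c hc
        by_cases hck : c.val < k
        · exact hfc c hck
        · have hck' : c = ⟨k, h⟩ := Fin.ext (show c.val = k by omega)
          rw [hck', hfk]
          exact Fin.ext (by simp only [Fin.val_mk]; rw [hxval])
  funext c
  have hc := c.isLt
  by_cases hcl : c.val = n - 1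
  · have : c = ⟨n - 1, by omega⟩ := Fin.ext hcl
    rw [this]
    simp [fB]
  · have := (key (n - 1) le_rfl).2 c (by omega)
    rw [this]
    simp only [fB]
    rw [if_neg hcl]

lemma chain (ρ : Equiv.Perm (Fin n)) (N : ℕ)
    (h : ∀ i j : Fin n, i < j → j.val < N → ρ j < ρ i) :
    ∀ d : ℕ, ∀ i j : Fin n, i.val + d = j.val → j.val < N →
      (ρ j).val + d ≤ (ρ i).val := by
  intro d
  induction d with
  | zero =>
    intro i j hij _
    have : i = j := Fin.ext (by omega)
    subst this
    omega
  | succ d ih =>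
    intro i j hij hjN
    have hi1 : i.val + 1 < n := by have := j.isLt; omega
    have h1 : ρ (⟨i.val + 1, hi1⟩ : Fin n) < ρ i := by
      apply h
      · rw [Fin.lt_def]; simp only [Fin.val_mk]; omega
      · simp only [Fin.val_mk]; omega
    have h2 := ih ⟨i.val + 1, hi1⟩ j (by simp only [Fin.val_mk]; omega) hjN
    have h3 := Fin.lt_def.mp h1
    omega


lemma avoids_char (hn : 2 ≤ n) (ρ : Equiv.Perm (Fin n))
    (hA : AvoidsAll ρ [p123, p132, p231, p312]) :
    ρ = Fin.revPerm ∨ ρ = ρB n := by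
  have h123 : ¬ ContainsPattern ρ p123 := hA p123 (by simp)
  have h132 : ¬ ContainsPattern ρ p132 := hA p132 (by simp)
  have h231 : ¬ ContainsPattern ρ p231 := hA p231 (by simp)
  have h312 : ¬ ContainsPattern ρ p312 := hA p312 (by simp)
  have hlast : n - 1 < n := by omega
  set lst : Fin n := ⟨n - 1, hlast⟩ with hlst
  have claim1 : ∀ i j : Fin n, i < j → j.val < n - 1 → ρ j < ρ i := by
    intro i j hij hj
    by_contra hc
    push_neg at hc
    have hij' : ρ i < ρ j := lt_of_le_of_ne hc (ρ.injective.ne hij.ne)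
    have hjc : j < lst := by rw [Fin.lt_def]; simp only [hlst, Fin.val_mk]; omega
    have hic : i < lst := hij.trans hjc
    have hne1 : ρ lst ≠ ρ i := ρ.injective.ne (Fin.ne_of_gt hic)
    have hne2 : ρ lst ≠ ρ j := ρ.injective.ne (Fin.ne_of_gt hjc)
    rcases lt_trichotomy (ρ j) (ρ lst) with h1 | h1 | h1
    · exact h123 (contains_of_triple ρ p123 i j lst hij hjc
        (iff_of_true (by decide) hij') (iff_of_true (by decide) (hij'.trans h1))
        (iff_of_true (by decide) h1))
    · exact hne2 h1.symm
    · rcases lt_trichotomy (ρ lst) (ρ i) with h2 | h2 | h2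
      · exact h231 (contains_of_triple ρ p231 i j lst hij hjc
          (iff_of_true (by decide) hij') (iff_of_false (by decide) (asymm h2))
          (iff_of_false (by decide) (asymm h1)))
      · exact hne1 h2
      · exact h132 (contains_of_triple ρ p132 i j lst hij hjc
          (iff_of_true (by decide) hij') (iff_of_true (by decide) h2)
          (iff_of_false (by decide) (asymm h1)))
  have claim2 : ∀ i j : Fin n, i < j → j.val < n - 1 →
      ¬ (ρ j < ρ lst ∧ ρ lst < ρ i) := by
    rintro i j hij hj ⟨hb1, hb2⟩
    have hjc : j < lst := by rw [Fin.lt_def]; simp only [hlst, Fin.val_mk]; omega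
    exact h312 (contains_of_triple ρ p312 i j lst hij hjc
      (iff_of_false (by decide) (asymm (claim1 i j hij hj)))
      (iff_of_false (by decide) (asymm hb2))
      (iff_of_true (by decide) hb1))
  have h0n : (0 : ℕ) < n := by omega
  set z : Fin n := ⟨0, h0n⟩ with hz
  set w : Fin n := ⟨n - 2, by omega⟩ with hw
  have hwlst : w ≠ lst := by
    intro hh
    have := congrArg Fin.val hh
    simp only [hw, hlst, Fin.val_mk] at this
    omega
  have hzlst : z ≠ lst := by
    intro hh
    have := congrArg Fin.val hh
    simp only [hz, hlst, Fin.val_mk] at this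
    omega
  rcases lt_trichotomy (ρ lst) (ρ w) with hb | hb | hb
  · -- decreasing: ρ = revPerm
    left
    have anti : ∀ i j : Fin n, i < j → ρ j < ρ i := by
      intro i j hij
      by_cases hj : j.val < n - 1
      · exact claim1 i j hij hj
      · have hjlst : j = lst := Fin.ext (by have := j.isLt; simp only [hlst, Fin.val_mk]; omega)
        rw [hjlst]
        by_cases hiw : i = w
        · rw [hiw]; exact hb
        · have hiw' : i < w := by
            rw [Fin.lt_def]
            have h1 := Fin.lt_def.mp hij
            have h2 : i.val ≠ n - 2 := fun hh => hiw (Fin.ext (by simp only [hw, Fin.val_mk]; omega))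
            rw [hjlst] at h1
            simp only [hlst, Fin.val_mk] at h1
            simp only [hw, Fin.val_mk]
            omega
          exact hb.trans (claim1 i w hiw' (by simp only [hw, Fin.val_mk]; omega))
    have hchain := chain ρ n (fun i j hij _ => anti i j hij)
    apply Equiv.ext
    intro i
    have hi := i.isLt
    apply Fin.ext
    have hupper := hchain i.val z i (by simp only [hz, Fin.val_mk]; omega) hi
    have hlower := hchain (n - 1 - i.val) i lst (by simp only [hlst, Fin.val_mk]; omega)
      (by simp only [hlst, Fin.val_mk]; omega)
    have h1 := (ρ z).isLt
    have h2 := (ρ i).isLt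
    show (ρ i).val = (Fin.rev i).val
    rw [Fin.val_rev]
    omega
  · exact absurd (ρ.injective hb) (Ne.symm hwlst)
  · -- ρ w < ρ lst
    right
    rcases lt_trichotomy (ρ lst) (ρ z) with hb0 | hb0 | hb0
    · exfalso
      have ind : ∀ k : ℕ, ∀ hk : k ≤ n - 2, ρ lst < ρ ⟨k, by omega⟩ := by
        intro k
        induction k with
        | zero => intro _; exact hb0
        | succ k ih =>
          intro hk
          have hbk := ih (by omega)
          have h2 := claim2 ⟨k, by omega⟩ ⟨k + 1, by omega⟩
            (by rw [Fin.lt_def]; simp only [Fin.val_mk]; omega)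
            (by simp only [Fin.val_mk]; omega)
          have hne : ρ lst ≠ ρ ⟨k + 1, by omega⟩ := by
            apply ρ.injective.ne
            intro hh
            have := congrArg Fin.val hh
            simp only [hlst, Fin.val_mk] at this
            omega
          rcases hne.lt_or_gt with hlt | hlt
          · exact hlt
          · exact absurd ⟨hlt, hbk⟩ h2
      have := ind (n - 2) le_rfl
      exact absurd this (asymm hb)
    · exact absurd (ρ.injective hb0) (Ne.symm hzlst)
    · -- ρ z < ρ lst : show ρ lst = lst and conclude
      have hall : ∀ i : Fin n, i ≠ lst → ρ i < ρ lst := by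
        intro i hi
        by_cases hiz : i = z
        · rw [hiz]; exact hb0
        · have hzi : z < i := by
            rw [Fin.lt_def]
            have h1 : i.val ≠ 0 := fun hh => hiz (Fin.ext (by simp only [hz, Fin.val_mk]; omega))
            simp only [hz, Fin.val_mk]
            omega
          have h2 : i.val < n - 1 := by
            have := i.isLt
            have h3 : i.val ≠ n - 1 := fun hh => hi (Fin.ext (by simp only [hlst, Fin.val_mk]; omega))
            omega
          exact (claim1 z i hzi h2).trans hb0
      have hblast : ρ lst = lst := by
        by_contra hbl
        set i : Fin n := ρ.symm lst with hidf
        have hρi : ρ i = lst := ρ.apply_symm_apply lst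
        have hil : i ≠ lst := by
          intro hh
          rw [hh] at hρi
          exact hbl hρi
        have := hall i hil
        rw [hρi] at this
        have h1 := Fin.lt_def.mp this
        have h2 := (ρ lst).isLt
        simp only [hlst, Fin.val_mk] at h1
        omega
      have hchain := chain ρ (n - 1) claim1
      apply Equiv.ext
      intro i
      have hi := i.isLt
      by_cases hil : i.val = n - 1
      · have : i = lst := Fin.ext (by simp only [hlst, Fin.val_mk]; omega)
        rw [this, hblast, ρB_val_last (by simp only [hlst, Fin.val_mk])]
      · apply Fin.ext
        rw [ρB_val_lt hil]
        have hin : i.val < n - 1 := by omega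
        have hupper := hchain i.val z i (by simp only [hz, Fin.val_mk]; omega) hin
        have hlower := hchain (n - 2 - i.val) i w (by simp only [hw, Fin.val_mk]; omega)
          (by simp only [hw, Fin.val_mk]; omega)
        have hz2 : (ρ z).val ≤ n - 2 := by
          have h1 := hall z hzlst
          rw [hblast] at h1
          have h2 := Fin.lt_def.mp h1
          simp only [hlst, Fin.val_mk] at h2
          omega
        omega

end Stmt4Aux

open Stmt4Aux in
theorem stmt4 (n : ℕ) (hn : 2 ≤ n) :
    pk n [p123, p132, p231, p312] = n + 1 := by
  classical
  have h0n : 0 < n := by omega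
  have hl : n - 1 < n := by omega
  let G : Fin (n + 1) → (Fin n → Fin n) := fun t =>
    if t.val = 0 then fA n else fB ⟨t.val - 1, by have := t.isLt; omega⟩
  have hfA0 : (fA n ⟨0, h0n⟩).val = n - 1 := by
    simp [fA, Fin.val_rev]
  have hfB0 : ∀ j : Fin n, (fB j ⟨0, h0n⟩).val = n - 2 := by
    intro j
    simp only [fB]
    rw [if_neg (by first | omega | (simp only [Fin.val_mk]; omega))]
    show n - 2 - 0 = n - 2
    omega
  have hfBlast : ∀ j : Fin n, fB j ⟨n - 1, hl⟩ = j := by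
    intro j
    simp [fB]
  have hGinj : Function.Injective G := by
    intro t t' h
    have ht := t.isLt
    have ht' := t'.isLt
    by_cases h1 : t.val = 0 <;> by_cases h2 : t'.val = 0
    · exact Fin.ext (by omega)
    · exfalso
      have h3 := congrArg (fun f => (f ⟨0, h0n⟩).val) h
      simp only [G, if_pos h1, if_neg h2] at h3
      rw [hfA0, hfB0] at h3
      omega
    · exfalso
      have h3 := congrArg (fun f => (f ⟨0, h0n⟩).val) h
      simp only [G, if_neg h1, if_pos h2] at h3
      rw [hfA0, hfB0] at h3
      omega
    · have h3 := congrArg (fun f => f ⟨n - 1, hl⟩) h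
      simp only [G, if_neg h1, if_neg h2] at h3
      rw [hfBlast, hfBlast] at h3
      have h4 := congrArg Fin.val h3
      simp only [Fin.val_mk] at h4
      exact Fin.ext (by omega)
  have hiff : ∀ f : Fin n → Fin n,
      (IsParkingFunction f ∧ ∃ ρ : Equiv.Perm (Fin n), IsParkingPerm f ρ ∧
        AvoidsAll ρ [p123, p132, p231, p312]) ↔ f ∈ Finset.image G Finset.univ := by
    intro f
    constructor
    · rintro ⟨hpf, ρ, hperm, hav⟩
      rw [Finset.mem_image]
      unfold IsParkingPerm at hperm
      rcases avoids_char hn ρ hav with hρ | hρ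
      · rw [hρ] at hperm
        have hconv : f = fA n := convA f hperm
        refine ⟨0, Finset.mem_univ _, ?_⟩
        simp only [G]
        rw [if_pos (by simp)]
        exact hconv.symm
      · rw [hρ] at hperm
        have hconv := convB hn f hperm
        refine ⟨⟨(f ⟨n - 1, hl⟩).val + 1, by have := (f ⟨n - 1, hl⟩).isLt; omega⟩,
          Finset.mem_univ _, ?_⟩
        simp only [G]
        rw [if_neg (by first | omega | (simp only [Fin.val_mk]; omega))]
        have harg : (⟨(f ⟨n - 1, hl⟩).val + 1 - 1,
            by have := (f ⟨n - 1, hl⟩).isLt; omega⟩ : Fin n) = f ⟨n - 1, hl⟩ :=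
          Fin.ext (by simp)
        rw [harg]
        exact (convB hn f hperm).symm
    · intro hf
      rw [Finset.mem_image] at hf
      obtain ⟨t, -, rfl⟩ := hf
      by_cases h1 : t.val = 0
      · simp only [G, if_pos h1]
        refine ⟨pfA (by omega), Fin.revPerm, parkA_full (by omega), ?_⟩
        intro σ hσ
        simp only [List.mem_cons, List.mem_singleton, List.not_mem_nil, or_false] at hσ
        rcases hσ with rfl | rfl | rfl | rfl
        · exact avoidA p123 0 1 (by decide) (by decide)
        · exact avoidA p132 0 1 (by decide) (by decide)
        · exact avoidA p231 0 1 (by decide) (by decide)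
        · exact avoidA p312 1 2 (by decide) (by decide)
      · simp only [G, if_neg h1]
        refine ⟨pfB hn _, ρB n, parkB_full hn _, ?_⟩
        intro σ hσ
        simp only [List.mem_cons, List.mem_singleton, List.not_mem_nil, or_false] at hσ
        rcases hσ with rfl | rfl | rfl | rfl
        · exact avoidB1 hn p123 (by decide)
        · exact avoidB1 hn p132 (by decide)
        · exact avoidB1 hn p231 (by decide)
        · exact avoidB312 hn
  unfold pk
  have e : {f : Fin n → Fin n // IsParkingFunction f ∧ ∃ ρ : Equiv.Perm (Fin n),
      IsParkingPerm f ρ ∧ AvoidsAll ρ [p123, p132, p231, p312]} ≃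
      {f : Fin n → Fin n // f ∈ Finset.image G Finset.univ} :=
    Equiv.subtypeEquivRight hiff
  rw [Nat.card_congr e]
  have hcard : Nat.card {f : Fin n → Fin n // f ∈ Finset.image G Finset.univ} =
      (Finset.image G Finset.univ).card := Nat.card_eq_finsetCard _
  rw [hcard, Finset.card_image_of_injective _ hGinj, Finset.card_univ, Fintype.card_fin]
end
end

section
/- For n ≥ 2, the number of parking functions of size n whose parking permutation avoids 132, 213, 231, and 312 equals n! + 1. -/
open Finset

noncomputable section

section Lemmas
variable {n : ℕ} (f : Fin n → Fin n)

/-- downstream success implies upstream success -/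
lemma parkAux_isSome_of_le {m k : ℕ} (hk : k ≤ m) (h : (parkAux f m).isSome) :
    (parkAux f k).isSome := by
  induction m with
  | zero => exact (Nat.le_zero.mp hk) ▸ h
  | succ m ih =>
    rcases Nat.eq_or_lt_of_le hk with rfl | hlt
    · exact h
    · apply ih (by omega)
      rw [parkAux] at h
      cases hm : parkAux f m with
      | none => rw [hm] at h; simp at h
      | some occ => simp

lemma parkAux_succ_cases {k : ℕ} {occ' : Fin n → Option (Fin n)}
    (h : parkAux f (k+1) = some occ') :
    ∃ occ, parkAux f k = some occ ∧
      ((∃ (hk : k < n) (hS : (Finset.univ.filter fun s => f ⟨k, hk⟩ ≤ s ∧ occ s = none).Nonempty),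
        occ' = Function.update occ
          ((Finset.univ.filter fun s => f ⟨k, hk⟩ ≤ s ∧ occ s = none).min' hS) (some ⟨k, hk⟩))
       ∨ (¬ k < n ∧ occ' = occ)) := by
  rw [parkAux] at h
  cases hm : parkAux f k with
  | none => rw [hm] at h; simp at h
  | some occ =>
    rw [hm, Option.bind_some] at h
    refine ⟨occ, rfl, ?_⟩
    by_cases hk : k < n
    · rw [dif_pos hk] at h
      by_cases hS : (Finset.univ.filter fun s => f ⟨k, hk⟩ ≤ s ∧ occ s = none).Nonempty
      · rw [dif_pos hS] at h
        exact Or.inl ⟨hk, hS, (Option.some_inj.mp h).symm⟩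
      · rw [dif_neg hS] at h; simp at h
    · rw [dif_neg hk] at h
      exact Or.inr ⟨hk, (Option.some_inj.mp h).symm⟩

/-- occupancy is monotone along the process -/
lemma parkAux_mono {k : ℕ} {occ : Fin n → Option (Fin n)}
    (hk : parkAux f k = some occ) {s c : Fin n} (hs : occ s = some c) :
    ∀ m, k ≤ m → ∀ occ', parkAux f m = some occ' → occ' s = some c := by
  intro m
  induction m with
  | zero =>
    intro h0 occ' hm
    have : k = 0 := by omega
    subst this; rw [hk] at hm; injection hm with h; exact h ▸ hs
  | succ m ih =>
    intro hkm occ' hm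
    rcases Nat.eq_or_lt_of_le hkm with heq | hlt
    · subst heq; rw [hk] at hm; injection hm with h; exact h ▸ hs
    · obtain ⟨occ₀, h₀, hcase⟩ := parkAux_succ_cases f hm
      have hocc₀ := ih (by omega) occ₀ h₀
      rcases hcase with ⟨hkn, hS, rfl⟩ | ⟨_, rfl⟩
      · rw [Function.update_apply]
        split_ifs with he
        · exfalso
          have hnone := (Finset.mem_filter.mp (Finset.min'_mem _ hS)).2.2
          rw [← he, hocc₀] at hnone; exact nomatch hnone
        · exact hocc₀
      · exact hocc₀

/-- every parked car parked at a spot ≥ its preference, and was among first k cars -/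
lemma parkAux_pref {k : ℕ} {occ : Fin n → Option (Fin n)}
    (hk : parkAux f k = some occ) {s c : Fin n} (hs : occ s = some c) :
    f c ≤ s ∧ c.val < k := by
  induction k generalizing occ with
  | zero =>
    rw [parkAux] at hk; cases Option.some_inj.mp hk; simp at hs
  | succ k ih =>
    obtain ⟨occ₀, h₀, hcase⟩ := parkAux_succ_cases f hk
    rcases hcase with ⟨hkn, hS, rfl⟩ | ⟨_, rfl⟩
    · rw [Function.update_apply] at hs
      split_ifs at hs with he
      · cases Option.some_inj.mp hs
        have := (Finset.mem_filter.mp (Finset.min'_mem _ hS)).2.1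
        exact ⟨he ▸ this, by simp⟩
      · obtain ⟨h1, h2⟩ := ih h₀ hs; exact ⟨h1, by omega⟩
    · obtain ⟨h1, h2⟩ := ih h₀ hs; exact ⟨h1, by omega⟩

end Lemmas
section Lemmas2
variable {n : ℕ} {f : Fin n → Fin n}

/-- computation when every car prefers a spot ≤ its index -/
lemma parkAux_of_le (hf : ∀ c, f c ≤ c.val) :
    ∀ k ≤ n, parkAux f k = some (fun s => if s.val < k then some s else none) := by
  intro k
  induction k with
  | zero =>
    intro _; rw [parkAux]; congr 1
  | succ k ih =>
    intro hk1
    have hk : k < n := hk1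
    rw [parkAux, ih (by omega), Option.bind_some, dif_pos hk]
    set S := Finset.univ.filter fun s : Fin n =>
      f ⟨k, hk⟩ ≤ s ∧ (if s.val < k then some s else none) = none with hSdef
    have hmem : (⟨k, hk⟩ : Fin n) ∈ S := by
      simp only [hSdef, Finset.mem_filter, Finset.mem_univ, true_and]
      exact ⟨hf ⟨k, hk⟩, by rw [if_neg (lt_irrefl k)]⟩
    have hS : S.Nonempty := ⟨_, hmem⟩
    rw [dif_pos hS]
    have hmin : S.min' hS = ⟨k, hk⟩ := by
      refine le_antisymm (Finset.min'_le _ _ hmem) (Finset.le_min' _ _ _ ?_)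
      intro y hy
      simp only [hSdef, Finset.mem_filter] at hy
      have : ¬ y.val < k := by
        intro hc; rw [if_pos hc] at hy; exact nomatch hy.2.2
      exact Fin.mk_le_of_le_val (by omega)
    rw [hmin]
    congr 1
    funext s
    rw [Function.update_apply]
    by_cases h1 : s = ⟨k, hk⟩
    · subst h1; rw [if_pos rfl, if_pos (Nat.lt_succ_self k)]
    · rw [if_neg h1]
      have hsne : s.val ≠ k := fun hc => h1 (Fin.ext hc)
      by_cases h2 : s.val < k
      · rw [if_pos h2, if_pos (by omega)]
      · rw [if_neg h2, if_neg (by omega)]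

/-- the corresponding parking permutation is the identity -/
lemma isParkingPerm_one (hf : ∀ c, f c ≤ c.val) : IsParkingPerm f 1 := by
  rw [IsParkingPerm, parkAux_of_le hf n le_rfl]
  congr 1; funext s; simp [s.isLt]

/-- computation when f = Fin.rev -/
lemma parkAux_rev :
    ∀ k ≤ n, parkAux (Fin.rev : Fin n → Fin n) k
      = some (fun s => if n - k ≤ s.val then some s.rev else none) := by
  intro k
  induction k with
  | zero =>
    intro _; rw [parkAux]; congr 1; funext s
    rw [if_neg (by omega)]
  | succ k ih =>
    intro hk1
    have hk : k < n := hk1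
    rw [parkAux, ih (by omega), Option.bind_some, dif_pos hk]
    have hrev : (Fin.rev (⟨k, hk⟩ : Fin n)).val = n - 1 - k := by
      rw [Fin.val_rev]; show n - (k + 1) = n - 1 - k; omega
    set S := Finset.univ.filter fun s : Fin n =>
      Fin.rev ⟨k, hk⟩ ≤ s ∧ (if n - k ≤ s.val then some s.rev else none) = none with hSdef
    have hmem : (⟨n - 1 - k, by omega⟩ : Fin n) ∈ S := by
      simp only [hSdef, Finset.mem_filter, Finset.mem_univ, true_and]
      constructor
      · rw [Fin.le_def]; exact le_of_eq hrev
      · rw [if_neg (show ¬ n - k ≤ n - 1 - k by omega)]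
    have hS : S.Nonempty := ⟨_, hmem⟩
    rw [dif_pos hS]
    have hmin : S.min' hS = ⟨n - 1 - k, by omega⟩ := by
      refine le_antisymm (Finset.min'_le _ _ hmem) (Finset.le_min' _ _ _ ?_)
      intro y hy
      simp only [hSdef, Finset.mem_filter] at hy
      have h1 : n - 1 - k ≤ y.val := by
        have := hy.2.1
        rw [Fin.le_def, hrev] at this; exact this
      exact Fin.mk_le_of_le_val h1
    rw [hmin]
    congr 1
    funext s
    rw [Function.update_apply]
    by_cases he : s = ⟨n - 1 - k, by omega⟩
    · subst he
      rw [if_pos rfl, if_pos (by simp; omega)]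
      congr 1
      apply Fin.ext
      rw [Fin.val_rev]
      simp; omega
    · rw [if_neg he]
      have hsne : s.val ≠ n - 1 - k := fun hc => he (Fin.ext hc)
      by_cases h2 : n - k ≤ s.val
      · rw [if_pos h2, if_pos (by omega)]
      · rw [if_neg h2, if_neg (by omega)]

lemma isParkingPerm_rev : IsParkingPerm (Fin.rev : Fin n → Fin n) Fin.revPerm := by
  rw [IsParkingPerm, parkAux_rev n le_rfl]
  congr 1; funext s
  rw [if_pos (by omega)]; rfl

end Lemmas2
section Lemmas3
variable {n : ℕ}

lemma strictMono_vec3 {α : Type*} [Preorder α] {a b c : α} (hab : a < b) (hbc : b < c) :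
    StrictMono ![a, b, c] := by
  intro x y hxy
  fin_cases x <;> fin_cases y <;>
    simp_all [Matrix.cons_val_zero, Matrix.cons_val_one, Matrix.head_cons] <;>
    first
      | exact hab | exact hbc | exact hab.trans hbc
      | exact absurd hxy (by decide)

lemma triple_mono {ρ : Equiv.Perm (Fin n)}
    (hA : AvoidsAll ρ [p132, p213, p231, p312]) {a b c : Fin n}
    (hab : a < b) (hbc : b < c) :
    (ρ a < ρ b ∧ ρ b < ρ c) ∨ (ρ b < ρ a ∧ ρ c < ρ b) := by
  have hab' : ρ a ≠ ρ b := fun h => absurd (ρ.injective h) hab.ne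
  have hbc' : ρ b ≠ ρ c := fun h => absurd (ρ.injective h) hbc.ne
  have hac' : ρ a ≠ ρ c := fun h => absurd (ρ.injective h) (hab.trans hbc).ne
  rcases lt_or_gt_of_ne hab' with h1 | h1 <;> rcases lt_or_gt_of_ne hbc' with h2 | h2 <;>
    rcases lt_or_gt_of_ne hac' with h3 | h3
  · exact Or.inl ⟨h1, h2⟩
  · exact absurd (h1.trans h2) (lt_asymm h3)
  · -- ρ a < ρ c < ρ b : pattern 132
    exfalso
    refine hA p132 (by simp) ⟨![a, b, c], strictMono_vec3 hab hbc, ?_⟩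
    have v1 := Fin.lt_def.mp h1; have v2 := Fin.lt_def.mp h2; have v3 := Fin.lt_def.mp h3
    have e0 : (![a, b, c] : Fin 3 → Fin n) 0 = a := rfl
    have e1 : (![a, b, c] : Fin 3 → Fin n) 1 = b := rfl
    have e2 : (![a, b, c] : Fin 3 → Fin n) 2 = c := rfl
    intro x y
    fin_cases x <;> fin_cases y <;>
      simp only [Fin.mk_zero, Fin.mk_one, show (⟨2, by omega⟩ : Fin 3) = 2 from rfl,
        e0, e1, e2, Fin.lt_def] <;>
      first
        | exact iff_of_true (by decide) (by omega)
        | exact iff_of_false (by decide) (by omega)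
  · -- ρ c < ρ a < ρ b : pattern 231
    exfalso
    refine hA p231 (by simp) ⟨![a, b, c], strictMono_vec3 hab hbc, ?_⟩
    have v1 := Fin.lt_def.mp h1; have v2 := Fin.lt_def.mp h2; have v3 := Fin.lt_def.mp h3
    have e0 : (![a, b, c] : Fin 3 → Fin n) 0 = a := rfl
    have e1 : (![a, b, c] : Fin 3 → Fin n) 1 = b := rfl
    have e2 : (![a, b, c] : Fin 3 → Fin n) 2 = c := rfl
    intro x y
    fin_cases x <;> fin_cases y <;>
      simp only [Fin.mk_zero, Fin.mk_one, show (⟨2, by omega⟩ : Fin 3) = 2 from rfl,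
        e0, e1, e2, Fin.lt_def] <;>
      first
        | exact iff_of_true (by decide) (by omega)
        | exact iff_of_false (by decide) (by omega)
  · -- ρ b < ρ a < ρ c : pattern 213
    exfalso
    refine hA p213 (by simp) ⟨![a, b, c], strictMono_vec3 hab hbc, ?_⟩
    have v1 := Fin.lt_def.mp h1; have v2 := Fin.lt_def.mp h2; have v3 := Fin.lt_def.mp h3
    have e0 : (![a, b, c] : Fin 3 → Fin n) 0 = a := rfl
    have e1 : (![a, b, c] : Fin 3 → Fin n) 1 = b := rfl
    have e2 : (![a, b, c] : Fin 3 → Fin n) 2 = c := rfl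
    intro x y
    fin_cases x <;> fin_cases y <;>
      simp only [Fin.mk_zero, Fin.mk_one, show (⟨2, by omega⟩ : Fin 3) = 2 from rfl,
        e0, e1, e2, Fin.lt_def] <;>
      first
        | exact iff_of_true (by decide) (by omega)
        | exact iff_of_false (by decide) (by omega)
  · -- ρ b < ρ c < ρ a : pattern 312
    exfalso
    refine hA p312 (by simp) ⟨![a, b, c], strictMono_vec3 hab hbc, ?_⟩
    have v1 := Fin.lt_def.mp h1; have v2 := Fin.lt_def.mp h2; have v3 := Fin.lt_def.mp h3
    have e0 : (![a, b, c] : Fin 3 → Fin n) 0 = a := rfl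
    have e1 : (![a, b, c] : Fin 3 → Fin n) 1 = b := rfl
    have e2 : (![a, b, c] : Fin 3 → Fin n) 2 = c := rfl
    intro x y
    fin_cases x <;> fin_cases y <;>
      simp only [Fin.mk_zero, Fin.mk_one, show (⟨2, by omega⟩ : Fin 3) = 2 from rfl,
        e0, e1, e2, Fin.lt_def] <;>
      first
        | exact iff_of_true (by decide) (by omega)
        | exact iff_of_false (by decide) (by omega)
  · exact absurd h3 (lt_asymm (h2.trans h1))
  · exact Or.inr ⟨h1, h2⟩

lemma perm_eq_one_of_strictMono {ρ : Equiv.Perm (Fin n)} (h : StrictMono ρ) : ρ = 1 := by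
  let o : Fin n ≃o Fin n := ⟨ρ, fun {a b} => h.le_iff_le⟩
  have ho : o = OrderIso.refl (Fin n) := Subsingleton.elim _ _
  refine Equiv.ext fun x => ?_
  have hx : o x = x := by rw [ho]; rfl
  exact hx

lemma perm_classify {ρ : Equiv.Perm (Fin n)} (hn : 2 ≤ n)
    (hA : AvoidsAll ρ [p132, p213, p231, p312]) : ρ = 1 ∨ ρ = Fin.revPerm := by
  set z : Fin n := ⟨0, by omega⟩ with hz
  set o : Fin n := ⟨1, by omega⟩ with ho
  have hzo : z < o := by rw [Fin.lt_def]; exact Nat.zero_lt_one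
  have hne : ρ z ≠ ρ o := fun h => absurd (ρ.injective h) hzo.ne
  rcases lt_or_gt_of_ne hne with hup | hdown
  · -- increasing case
    left
    apply perm_eq_one_of_strictMono
    have step1 : ∀ j, o < j → ρ o < ρ j := by
      intro j hj
      rcases triple_mono hA hzo hj with ⟨_, h⟩ | ⟨h, _⟩
      · exact h
      · exact absurd hup (lt_asymm h)
    have step0 : ∀ j, z < j → ρ z < ρ j := by
      intro j hj
      rcases eq_or_lt_of_le (show o ≤ j by rw [Fin.le_def]; exact Fin.lt_def.mp hj) with he | hlt
      · exact he ▸ hup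
      · exact hup.trans (step1 j hlt)
    intro i j hij
    rcases Nat.lt_trichotomy i.val 1 with hi | hi | hi
    · have : i = z := Fin.ext (Nat.lt_one_iff.mp hi)
      exact this ▸ step0 j (this ▸ hij)
    · have : i = o := Fin.ext hi
      exact this ▸ step1 j (this ▸ hij)
    · have hzi : z < i := by rw [Fin.lt_def]; exact lt_of_le_of_lt (Nat.zero_le 1) hi
      rcases triple_mono hA hzi hij with ⟨_, h⟩ | ⟨h, _⟩
      · exact h
      · exact absurd (step0 i hzi) (lt_asymm h)
  · -- decreasing case
    right
    have hanti : ∀ i j : Fin n, i < j → ρ j < ρ i := by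
      have step1 : ∀ j, o < j → ρ j < ρ o := by
        intro j hj
        rcases triple_mono hA hzo hj with ⟨h, _⟩ | ⟨_, h⟩
        · exact absurd hdown (lt_asymm h)
        · exact h
      have step0 : ∀ j, z < j → ρ j < ρ z := by
        intro j hj
        rcases eq_or_lt_of_le (show o ≤ j by rw [Fin.le_def]; exact Fin.lt_def.mp hj) with he | hlt
        · exact he ▸ hdown
        · exact (step1 j hlt).trans hdown
      intro i j hij
      rcases Nat.lt_trichotomy i.val 1 with hi | hi | hi
      · have : i = z := Fin.ext (Nat.lt_one_iff.mp hi)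
        exact this ▸ step0 j (this ▸ hij)
      · have : i = o := Fin.ext hi
        exact this ▸ step1 j (this ▸ hij)
      · have hzi : z < i := by rw [Fin.lt_def]; exact lt_of_le_of_lt (Nat.zero_le 1) hi
        rcases triple_mono hA hzi hij with ⟨h, _⟩ | ⟨_, h⟩
        · exact absurd (step0 i hzi) (lt_asymm h)
        · exact h
    have hmono : StrictMono fun x => ρ (Fin.rev x) := by
      intro x y hxy
      exact hanti _ _ (Fin.rev_lt_rev.mpr hxy)
    have : (Fin.revPerm.trans ρ) = 1 := perm_eq_one_of_strictMono hmono
    ext x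
    have := Equiv.ext_iff.mp this (Fin.rev x)
    simp only [Equiv.trans_apply, Fin.revPerm_apply, Fin.rev_rev, Equiv.Perm.coe_one,
      id_eq] at this
    rw [this, Fin.revPerm_apply]

lemma avoids_one : AvoidsAll (1 : Equiv.Perm (Fin n)) [p132, p213, p231, p312] := by
  intro σ hσ ⟨g, hg, hiff⟩
  have key : ∀ x y : Fin 3, x < y → σ x < σ y := by
    intro x y hxy
    exact (hiff x y).mpr (by simpa using hg hxy)
  fin_cases hσ
  · exact absurd (key 1 2 (by decide)) (by decide)
  · exact absurd (key 0 1 (by decide)) (by decide)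
  · exact absurd (key 1 2 (by decide)) (by decide)
  · exact absurd (key 0 1 (by decide)) (by decide)

lemma avoids_rev : AvoidsAll (Fin.revPerm : Equiv.Perm (Fin n)) [p132, p213, p231, p312] := by
  intro σ hσ ⟨g, hg, hiff⟩
  have key : ∀ x y : Fin 3, x < y → σ y < σ x := by
    intro x y hxy
    refine (hiff y x).mpr ?_
    simpa [Fin.revPerm_apply, Fin.rev_lt_rev] using hg hxy
  fin_cases hσ
  · exact absurd (key 0 1 (by decide)) (by decide)
  · exact absurd (key 1 2 (by decide)) (by decide)
  · exact absurd (key 0 1 (by decide)) (by decide)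
  · exact absurd (key 1 2 (by decide)) (by decide)

end Lemmas3
section Lemmas4
variable {n : ℕ}

lemma isParkingFunction_of_le {f : Fin n → Fin n} (hf : ∀ c, f c ≤ c.val) :
    IsParkingFunction f := by
  intro i
  calc i.val + 1 = (Finset.Iic i).card := (Fin.card_Iic i).symm
    _ ≤ _ := by
        apply Finset.card_le_card
        intro j hj
        rw [Finset.mem_Iic] at hj
        rw [Finset.mem_filter]
        exact ⟨Finset.mem_univ _, le_trans (by exact hf j) hj⟩

lemma isParkingFunction_rev : IsParkingFunction (Fin.rev : Fin n → Fin n) := by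
  intro i
  have hin : i.val < n := i.isLt
  have hcard : (Finset.Ici (⟨n - 1 - i.val, by omega⟩ : Fin n)).card = i.val + 1 := by
    rw [Fin.card_Ici]; show n - (n - 1 - i.val) = i.val + 1; omega
  calc i.val + 1 = _ := hcard.symm
    _ ≤ _ := by
        apply Finset.card_le_card
        intro j hj
        rw [Finset.mem_Ici] at hj
        rw [Finset.mem_filter]
        refine ⟨Finset.mem_univ _, ?_⟩
        have hj' : n - 1 - i.val ≤ j.val := hj
        rw [Fin.le_def, Fin.val_rev]
        have := j.isLt
        omega

/-- if the final configuration is the reversal, the preferences must be `Fin.rev` -/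
lemma f_eq_rev {f : Fin n → Fin n}
    (h : parkAux f n = some fun i => some (Fin.rev i)) : f = Fin.rev := by
  have hsome : (parkAux f n).isSome := by rw [h]; rfl
  have claim : ∀ k, k ≤ n →
      (parkAux f k = some fun s => if n - k ≤ s.val then some s.rev else none) ∧
      (∀ c : Fin n, c.val < k → f c = Fin.rev c) := by
    intro k
    induction k with
    | zero =>
      intro _
      constructor
      · rw [parkAux]; congr 1; funext s
        have := s.isLt
        exact (if_neg (by omega)).symm
      · intro c hc; omega
    | succ k ih =>
      intro hk1
      have hk : k < n := hk1
      obtain ⟨hocc, hcars⟩ := ih (by omega)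
      obtain ⟨occ', hocc'⟩ := Option.isSome_iff_exists.mp (parkAux_isSome_of_le f hk1 hsome)
      obtain ⟨occ₀, h₀, hcase⟩ := parkAux_succ_cases f hocc'
      have hocc₀ : occ₀ = fun s => if n - k ≤ s.val then some s.rev else none := by
        rw [h₀] at hocc; injection hocc
      rcases hcase with ⟨hkn, hS, hup⟩ | ⟨hbad, _⟩
      swap
      · exact absurd hk hbad
      have hm₀mem := Finset.mem_filter.mp (Finset.min'_mem _ hS)
      set m₀ := (Finset.univ.filter fun s => f ⟨k, hkn⟩ ≤ s ∧ occ₀ s = none).min' hS with hm₀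
      -- car k ends at m₀, so in the final configuration m₀ holds car k
      have hfin : (fun i : Fin n => some (Fin.rev i)) m₀ = some ⟨k, hkn⟩ := by
        apply parkAux_mono f hocc' (s := m₀) (c := ⟨k, hkn⟩) _ n (by omega) _ h
        rw [hup, Function.update_apply, if_pos rfl]
      have hm₀rev : m₀.rev = ⟨k, hkn⟩ := by
        simpa using hfin
      have hm₀val : m₀.val = n - 1 - k := by
        have : m₀.rev.val = k := by rw [hm₀rev]
        rw [Fin.val_rev] at this
        have := m₀.isLt
        omega
      -- f k ∈ S hence m₀ ≤ f k, and f k ≤ m₀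
      have hfk_le : f ⟨k, hkn⟩ ≤ m₀ := hm₀mem.2.1
      have hfkS : f ⟨k, hkn⟩ ∈ Finset.univ.filter fun s => f ⟨k, hkn⟩ ≤ s ∧ occ₀ s = none := by
        rw [Finset.mem_filter]
        refine ⟨Finset.mem_univ _, le_refl _, ?_⟩
        rw [hocc₀]
        have : (f ⟨k, hkn⟩).val ≤ m₀.val := hfk_le
        exact if_neg (by omega)
      have hfk : f ⟨k, hkn⟩ = m₀ := le_antisymm hfk_le (Finset.min'_le _ _ hfkS)
      constructor
      · rw [hocc', hup]
        congr 1
        funext s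
        simp only [Function.update_apply, hocc₀]
        by_cases he : s = m₀
        · subst he
          rw [if_pos rfl, if_pos (by omega), hm₀rev]
        · have hsv : s.val ≠ m₀.val := fun hc => he (Fin.ext hc)
          rw [if_neg he]
          have := s.isLt
          by_cases h2 : n - k ≤ s.val
          · rw [if_pos h2, if_pos (by omega)]
          · rw [if_neg h2, if_neg (by omega)]
      · intro c hc
        rcases Nat.lt_succ_iff_lt_or_eq.mp hc with h | h
        · exact hcars c h
        · have : c = ⟨k, hkn⟩ := Fin.ext h
          subst this
          rw [hfk]
          apply Fin.ext
          rw [Fin.val_rev, hm₀val]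
          omega
  funext c
  exact (claim n le_rfl).2 c c.isLt

/-- The characterization of the counted set. -/
lemma mem_iff (hn : 2 ≤ n) (f : Fin n → Fin n) :
    (IsParkingFunction f ∧ ∃ ρ : Equiv.Perm (Fin n), IsParkingPerm f ρ ∧
      AvoidsAll ρ [p132, p213, p231, p312]) ↔
    ((∀ c, f c ≤ c.val) ∨ f = Fin.rev) := by
  constructor
  · rintro ⟨-, ρ, hρ, hA⟩
    rcases perm_classify hn hA with rfl | rfl
    · left
      intro c
      have := (parkAux_pref f hρ (s := c) (c := c) rfl).1
      exact this
    · right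
      exact f_eq_rev hρ
  · rintro (hf | rfl)
    · exact ⟨isParkingFunction_of_le hf, 1, isParkingPerm_one hf, avoids_one⟩
    · exact ⟨isParkingFunction_rev, Fin.revPerm, isParkingPerm_rev, avoids_rev⟩

end Lemmas4
section Counting
open scoped Classical

lemma card_le_subtype (n : ℕ) :
    Nat.card {f : Fin n → Fin n // ∀ c, f c ≤ c.val} = n.factorial := by
  rw [Nat.card_eq_fintype_card]
  have e : {f : Fin n → Fin n // ∀ c, f c ≤ c.val} ≃ ∀ c : Fin n, {b : Fin n // b.val ≤ c.val} :=
    @Equiv.subtypePiEquivPi (Fin n) (fun _ => Fin n) (fun c b => b.val ≤ c.val)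
  rw [Fintype.card_congr e, Fintype.card_pi]
  have hcard : ∀ c : Fin n, Fintype.card {b : Fin n // b.val ≤ c.val} = c.val + 1 := by
    intro c
    rw [Fintype.card_subtype, ← Fin.card_Iic c]
    congr 1
    ext b
    simp only [Finset.mem_filter, Finset.mem_univ, true_and, Finset.mem_Iic, Fin.le_def]
  calc ∏ c : Fin n, Fintype.card {b : Fin n // b.val ≤ c.val}
      = ∏ c : Fin n, (c.val + 1) := Finset.prod_congr rfl fun c _ => hcard c
    _ = ∏ i ∈ Finset.range n, (i + 1) := Fin.prod_univ_eq_prod_range _ n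
    _ = n.factorial := Finset.prod_range_add_one_eq_factorial n

theorem stmt5' (n : ℕ) (hn : 2 ≤ n) :
    pk n [p132, p213, p231, p312] = n.factorial + 1 := by
  rw [pk]
  rw [Nat.card_congr (Equiv.subtypeEquivRight fun f => mem_iff hn f)]
  rw [Nat.card_eq_fintype_card, Fintype.card_subtype]
  have hsplit : (Finset.univ.filter fun f : Fin n → Fin n =>
      (∀ c, f c ≤ c.val) ∨ f = Fin.rev)
      = insert (Fin.rev : Fin n → Fin n)
          (Finset.univ.filter fun f : Fin n → Fin n => ∀ c, f c ≤ c.val) := by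
    ext g
    simp only [Finset.mem_filter, Finset.mem_univ, true_and, Finset.mem_insert]
    tauto
  rw [hsplit, Finset.card_insert_of_notMem, ← Fintype.card_subtype,
    ← Nat.card_eq_fintype_card, card_le_subtype]
  · intro hmem
    rw [Finset.mem_filter] at hmem
    have := hmem.2 ⟨0, by omega⟩
    rw [Fin.val_rev] at this
    have h2 : n - (0 + 1) ≤ 0 := this
    omega
end Counting

theorem stmt5 (n : ℕ) (hn : 2 ≤ n) :
    pk n [p132, p213, p231, p312] = n.factorial + 1 := stmt5' n hn
end
end

section
/- For n ≥ 2, the number of parking functions of size n whose parking permutation avoids 132, 231, 312, and 321 equals (3/2)·n!. -/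
open Finset

noncomputable section

/-! ### Characterization of the parking process -/

variable {n : ℕ}

def Cond (f : Fin n → Fin n) (ρ : Equiv.Perm (Fin n)) : Prop :=
  ∀ c : Fin n, f c ≤ ρ.symm c ∧ ∀ s : Fin n, f c ≤ s → s < ρ.symm c → ρ s < c

def cOcc (ρ : Equiv.Perm (Fin n)) (k : ℕ) : Fin n → Option (Fin n) :=
  fun s => if (ρ s).val < k then some (ρ s) else none

theorem park_of_cond {f : Fin n → Fin n} {ρ : Equiv.Perm (Fin n)} (hc : Cond f ρ) :
    ∀ k, k ≤ n → parkAux f k = some (cOcc ρ k) := by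
  intro k
  induction k with
  | zero =>
    intro _
    have h0 : cOcc ρ 0 = fun _ => none := funext fun s => if_neg (by omega)
    rw [parkAux, h0]
  | succ k ih =>
    intro hk1
    have hkn : k < n := hk1
    rw [parkAux, ih (le_of_lt hkn), Option.bind_some]
    rw [dif_pos hkn]
    set c : Fin n := ⟨k, hkn⟩ with hcdef
    set S := (Finset.univ.filter fun s => f c ≤ s ∧ cOcc ρ k s = none) with hSdef
    have htmem : ρ.symm c ∈ S := by
      simp only [hSdef, Finset.mem_filter, Finset.mem_univ, true_and]
      refine ⟨(hc c).1, ?_⟩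
      simp [cOcc, Equiv.apply_symm_apply, hcdef]
    have hS : S.Nonempty := ⟨_, htmem⟩
    rw [dif_pos hS]
    have hmin : S.min' hS = ρ.symm c := by
      refine le_antisymm (Finset.min'_le _ _ htmem) (Finset.le_min' _ _ _ ?_)
      intro y hy
      by_contra hlt
      push_neg at hlt
      simp only [hSdef, Finset.mem_filter, Finset.mem_univ, true_and] at hy
      have := (hc c).2 y hy.1 hlt
      have h2 := hy.2
      simp only [cOcc, ite_eq_right_iff] at h2
      exact absurd (h2 (Fin.lt_def.mp this)) (Option.some_ne_none _)
    rw [hmin]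
    congr 1
    funext s
    by_cases hs : s = ρ.symm c
    · subst hs
      simp [cOcc, Function.update_self, Equiv.apply_symm_apply, hcdef]
    · rw [Function.update_of_ne hs]
      have hne : ρ s ≠ c := fun h => hs (by rw [← h]; simp)
      simp only [cOcc]
      have : (ρ s).val < k + 1 ↔ (ρ s).val < k := by
        constructor
        · intro h
          rcases Nat.lt_succ_iff_lt_or_eq.mp h with h | h
          · exact h
          · exact absurd (Fin.ext h : ρ s = c) hne
        · omega
      simp [this]

theorem parkAux_isSome_mono {f : Fin n → Fin n} {k k' : ℕ} (h : k ≤ k')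
    (hs : (parkAux f k').isSome) : (parkAux f k).isSome := by
  induction k' with
  | zero => exact (Nat.le_zero.mp h) ▸ hs
  | succ m ih =>
    rcases Nat.lt_succ_iff_lt_or_eq.mp (Nat.lt_succ_of_le h) with h' | h'
    · apply ih (Nat.lt_succ_iff.mp h')
      rcases hm : parkAux f m with _ | o
      · rw [parkAux, hm] at hs; simp at hs
      · simp
    · exact h' ▸ hs

/-- One step of the parking process. -/
theorem parkAux_succ {f : Fin n → Fin n} {k : ℕ} (hkn : k < n) {o o' : Fin n → Option (Fin n)}
    (h1 : parkAux f k = some o) (h2 : parkAux f (k+1) = some o') :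
    ∃ hS : (Finset.univ.filter fun s => f ⟨k, hkn⟩ ≤ s ∧ o s = none).Nonempty,
      o' = Function.update o
        ((Finset.univ.filter fun s => f ⟨k, hkn⟩ ≤ s ∧ o s = none).min' hS) (some ⟨k, hkn⟩) := by
  rw [parkAux, h1, Option.bind_some, dif_pos hkn] at h2
  split at h2
  · next hS => exact ⟨hS, (Option.some_inj.mp h2).symm⟩
  · exact absurd h2 (by simp)

/-- Occupied spots stay occupied with the same car. -/
theorem parkAux_occ_mono {f : Fin n → Fin n} {s c : Fin n} {k k' : ℕ} (h : k ≤ k') :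
    ∀ {o o' : Fin n → Option (Fin n)}, parkAux f k = some o → parkAux f k' = some o' →
      o s = some c → o' s = some c := by
  induction k', h using Nat.le_induction with
  | base =>
    intro o o' h1 h2 hc
    rw [h1, Option.some_inj] at h2
    rw [← h2]; exact hc
  | succ m hm ih =>
    intro o o' h1 h2 hc
    have hsome : (parkAux f m).isSome := parkAux_isSome_mono (Nat.le_succ m) (by rw [h2]; rfl)
    rcases Option.isSome_iff_exists.mp hsome with ⟨om, hom⟩
    have hmid : om s = some c := ih h1 hom hc
    by_cases hmn : m < n
    · obtain ⟨hS, ho'⟩ := parkAux_succ hmn hom h2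
      rw [ho']
      have hsne : s ≠ (Finset.univ.filter fun t => f ⟨m, hmn⟩ ≤ t ∧ om t = none).min' hS := by
        intro hEq
        have hmem := Finset.min'_mem _ hS
        rw [← hEq, Finset.mem_filter] at hmem
        rw [hmid] at hmem
        simp at hmem
      rw [Function.update_of_ne hsne]
      exact hmid
    · rw [parkAux, hom, Option.bind_some, dif_neg hmn, Option.some_inj] at h2
      rw [← h2]; exact hmid

theorem cond_of_park {f : Fin n → Fin n} {ρ : Equiv.Perm (Fin n)}
    (hp : parkAux f n = some (fun s => some (ρ s))) : Cond f ρ := by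
  have key : ∀ k, k ≤ n → parkAux f k = some (cOcc ρ k) ∧
      (∀ c : Fin n, c.val < k → f c ≤ ρ.symm c ∧
        ∀ s : Fin n, f c ≤ s → s < ρ.symm c → ρ s < c) := by
    intro k
    induction k with
    | zero =>
      intro _
      refine ⟨?_, fun c hc => absurd hc (by omega)⟩
      have h0 : cOcc ρ 0 = fun _ => none := funext fun s => if_neg (by omega)
      rw [parkAux, h0]
    | succ k ih =>
      intro hk1
      have hkn : k < n := hk1
      obtain ⟨hpark, hcond⟩ := ih (le_of_lt hkn)
      have hnext : (parkAux f (k+1)).isSome := parkAux_isSome_mono hk1 (by rw [hp]; rfl)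
      rcases Option.isSome_iff_exists.mp hnext with ⟨o', ho'⟩
      obtain ⟨hS, ho''⟩ := parkAux_succ hkn hpark ho'
      have hmmem := Finset.min'_mem _ hS
      rw [Finset.mem_filter] at hmmem
      have hmle : ∀ t : Fin n, f ⟨k, hkn⟩ ≤ t → cOcc ρ k t = none →
          (Finset.univ.filter fun s => f ⟨k, hkn⟩ ≤ s ∧ cOcc ρ k s = none).min' hS ≤ t := by
        intro t h1 h2
        exact Finset.min'_le _ _ (by simp [h1, h2])
      set m := (Finset.univ.filter fun s => f ⟨k, hkn⟩ ≤ s ∧ cOcc ρ k s = none).min' hS with hmdef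
      -- the parked spot m holds car k in the final configuration
      have hfinal : (fun s => some (ρ s)) m = some ⟨k, hkn⟩ := by
        apply parkAux_occ_mono hk1 ho' hp
        rw [ho'']
        simp [Function.update_self]
      have hρm : ρ m = ⟨k, hkn⟩ := Option.some_inj.mp hfinal
      have hminv : ρ.symm ⟨k, hkn⟩ = m := by rw [← hρm]; simp
      constructor
      · -- parkAux f (k+1) = some (cOcc ρ (k+1))
        rw [ho', Option.some_inj] at *
        rw [ho'']
        funext s
        by_cases hs : s = m
        · subst hs
          simp [cOcc, Function.update_self, hρm]
        · rw [Function.update_of_ne hs]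
          have hne : ρ s ≠ ⟨k, hkn⟩ := fun h => hs (by rw [← hminv, ← h]; simp)
          simp only [cOcc]
          have hiff : (ρ s).val < k + 1 ↔ (ρ s).val < k := by
            constructor
            · intro h
              rcases Nat.lt_succ_iff_lt_or_eq.mp h with h | h
              · exact h
              · exact absurd (Fin.ext h : ρ s = ⟨k, hkn⟩) hne
            · omega
          simp [hiff]
      · intro c hc
        rcases Nat.lt_succ_iff_lt_or_eq.mp hc with h | h
        · exact hcond c h
        · have hcck : c = ⟨k, hkn⟩ := Fin.ext h
          refine ⟨?_, ?_⟩
          · rw [hcck, hminv]; exact hcck ▸ hmmem.2.1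
          · intro s hfs hsm
            rw [hcck, hminv] at hsm
            by_contra hge
            push_neg at hge
            have h2 : cOcc ρ k s = none := by
              simp only [cOcc, ite_eq_right_iff]
              intro hlt
              exfalso
              have : (c : ℕ) ≤ (ρ s : ℕ) := hge
              omega
            exact absurd (hmle s (hcck ▸ hfs) h2) (not_le.mpr hsm)
  intro c
  exact (key n le_rfl).2 c c.isLt

theorem isParkingPerm_iff_cond {f : Fin n → Fin n} {ρ : Equiv.Perm (Fin n)} :
    IsParkingPerm f ρ ↔ Cond f ρ := by
  constructor
  · exact cond_of_park
  · intro hc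
    have := park_of_cond hc n le_rfl
    rw [IsParkingPerm, this]
    congr 1
    funext s
    simp [cOcc, (ρ s).isLt]

theorem perm_sm {n : ℕ} (σ : Equiv.Perm (Fin n)) (h : StrictMono ⇑σ) : σ = 1 := by
  ext x
  have h2 : ((StrictMono.orderIsoOfSurjective ⇑σ h σ.surjective x : Fin n) : ℕ) = (x : ℕ) :=
    Fin.coe_orderIso_apply _ x
  have h3 := congrFun (StrictMono.coe_orderIsoOfSurjective ⇑σ h σ.surjective) x
  rw [h3] at h2
  simpa using h2

theorem sm3 {N : ℕ} {a b c : Fin N} (hab : a < b) (hbc : b < c) : StrictMono ![a, b, c] := by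
  intro x y hxy
  fin_cases x <;> fin_cases y <;>
    first
      | exact absurd hxy (by decide)
      | exact hab
      | exact hbc
      | exact hab.trans hbc

theorem contains132 {N : ℕ} (π : Equiv.Perm (Fin N)) (i0 i1 i2 : Fin N)
    (g01 : i0 < i1) (g12 : i1 < i2)
    (ha : π i0 < π i2) (hb : π i2 < π i1) : ContainsPattern π p132 := by
  refine ⟨![i0, i1, i2], sm3 g01 g12, ?_⟩
  intro a b
  fin_cases a <;> fin_cases b
  · exact iff_of_false (by decide) (lt_irrefl _)
  · exact iff_of_true (by decide) (ha.trans hb)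
  · exact iff_of_true (by decide) ha
  · exact iff_of_false (by decide) (ha.trans hb).asymm
  · exact iff_of_false (by decide) (lt_irrefl _)
  · exact iff_of_false (by decide) hb.asymm
  · exact iff_of_false (by decide) ha.asymm
  · exact iff_of_true (by decide) hb
  · exact iff_of_false (by decide) (lt_irrefl _)

theorem contains231 {N : ℕ} (π : Equiv.Perm (Fin N)) (i0 i1 i2 : Fin N)
    (g01 : i0 < i1) (g12 : i1 < i2)
    (ha : π i2 < π i0) (hb : π i0 < π i1) : ContainsPattern π p231 := by
  refine ⟨![i0, i1, i2], sm3 g01 g12, ?_⟩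
  intro a b
  fin_cases a <;> fin_cases b
  · exact iff_of_false (by decide) (lt_irrefl _)
  · exact iff_of_true (by decide) hb
  · exact iff_of_false (by decide) ha.asymm
  · exact iff_of_false (by decide) hb.asymm
  · exact iff_of_false (by decide) (lt_irrefl _)
  · exact iff_of_false (by decide) (ha.trans hb).asymm
  · exact iff_of_true (by decide) ha
  · exact iff_of_true (by decide) (ha.trans hb)
  · exact iff_of_false (by decide) (lt_irrefl _)

theorem contains321 {N : ℕ} (π : Equiv.Perm (Fin N)) (i0 i1 i2 : Fin N)
    (g01 : i0 < i1) (g12 : i1 < i2)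
    (ha : π i2 < π i1) (hb : π i1 < π i0) : ContainsPattern π p321 := by
  refine ⟨![i0, i1, i2], sm3 g01 g12, ?_⟩
  intro a b
  fin_cases a <;> fin_cases b
  · exact iff_of_false (by decide) (lt_irrefl _)
  · exact iff_of_false (by decide) hb.asymm
  · exact iff_of_false (by decide) (ha.trans hb).asymm
  · exact iff_of_true (by decide) hb
  · exact iff_of_false (by decide) (lt_irrefl _)
  · exact iff_of_false (by decide) ha.asymm
  · exact iff_of_true (by decide) (ha.trans hb)
  · exact iff_of_true (by decide) ha
  · exact iff_of_false (by decide) (lt_irrefl _)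

theorem contains312 {N : ℕ} (π : Equiv.Perm (Fin N)) (i0 i1 i2 : Fin N)
    (g01 : i0 < i1) (g12 : i1 < i2)
    (ha : π i1 < π i2) (hb : π i2 < π i0) : ContainsPattern π p312 := by
  refine ⟨![i0, i1, i2], sm3 g01 g12, ?_⟩
  intro a b
  fin_cases a <;> fin_cases b
  · exact iff_of_false (by decide) (lt_irrefl _)
  · exact iff_of_false (by decide) (ha.trans hb).asymm
  · exact iff_of_false (by decide) hb.asymm
  · exact iff_of_true (by decide) (ha.trans hb)
  · exact iff_of_false (by decide) (lt_irrefl _)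
  · exact iff_of_true (by decide) ha
  · exact iff_of_true (by decide) hb
  · exact iff_of_false (by decide) ha.asymm
  · exact iff_of_false (by decide) (lt_irrefl _)

theorem id_avoids {N : ℕ} (σ : Equiv.Perm (Fin 3)) (hσ : σ ≠ 1) :
    ¬ ContainsPattern (1 : Equiv.Perm (Fin N)) σ := by
  rintro ⟨g, hg, hiff⟩
  apply hσ
  apply perm_sm
  intro a b hab
  exact (hiff a b).mpr (by simpa using hg hab)

theorem swap01_lt {m : ℕ} {x y : Fin (m + 2)} (hxy : x < y) (hy : 2 ≤ y.val) :
    Equiv.swap (0 : Fin (m+2)) 1 x < Equiv.swap (0 : Fin (m+2)) 1 y := by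
  have hy0 : y ≠ 0 := by intro h; subst h; simp at hy
  have hy1 : y ≠ 1 := by
    intro h; subst h
    rw [Fin.val_one] at hy; omega
  rw [Equiv.swap_apply_of_ne_of_ne hy0 hy1]
  rcases eq_or_ne x 0 with rfl | hx0
  · rw [Equiv.swap_apply_left, Fin.lt_def, Fin.val_one]; omega
  rcases eq_or_ne x 1 with rfl | hx1
  · rw [Equiv.swap_apply_right, Fin.lt_def, Fin.val_zero]; omega
  · rw [Equiv.swap_apply_of_ne_of_ne hx0 hx1]; exact hxy

theorem tau_avoids {m : ℕ} (σ : Equiv.Perm (Fin 3)) (hσ : ¬ (σ 0 < σ 2 ∧ σ 1 < σ 2)) :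
    ¬ ContainsPattern (Equiv.swap (0 : Fin (m+2)) 1) σ := by
  rintro ⟨g, hg, hiff⟩
  apply hσ
  have h01 : g 0 < g 1 := hg (by decide)
  have h12 : g 1 < g 2 := hg (by decide)
  have hy : 2 ≤ (g 2).val := by
    have a1 : (g 0).val < (g 1).val := h01
    have a2 : (g 1).val < (g 2).val := h12
    omega
  exact ⟨(hiff 0 2).mpr (swap01_lt (h01.trans h12) hy), (hiff 1 2).mpr (swap01_lt h12 hy)⟩

theorem rho_cases {m : ℕ} (ρ : Equiv.Perm (Fin (m + 2)))
    (hav : AvoidsAll ρ [p132, p231, p312, p321]) :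
    ρ = 1 ∨ ρ = Equiv.swap 0 1 := by
  have h132 := hav p132 (by simp)
  have h231 := hav p231 (by simp)
  have h312 := hav p312 (by simp)
  have h321 := hav p321 (by simp)
  have step1 : ∀ i j : Fin (m+2), 0 < i → i < j → ρ i < ρ j := by
    intro i j hi hij
    by_contra hge
    push_neg at hge
    have hne : ρ j ≠ ρ i := fun h => absurd (ρ.injective h) (ne_of_gt hij)
    have hlt : ρ j < ρ i := lt_of_le_of_ne hge hne
    have h0j : (0 : Fin (m+2)) < j := hi.trans hij
    rcases lt_trichotomy (ρ 0) (ρ j) with hA | hA | hA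
    · exact h132 (contains132 ρ 0 i j hi hij hA hlt)
    · exact absurd (ρ.injective hA) (ne_of_lt h0j)
    · rcases lt_trichotomy (ρ 0) (ρ i) with hB | hB | hB
      · exact h231 (contains231 ρ 0 i j hi hij hA hB)
      · exact absurd (ρ.injective hB) (ne_of_lt hi)
      · exact h321 (contains321 ρ 0 i j hi hij hlt hB)
  have step2 : (ρ 0).val ≤ 1 := by
    by_contra hge
    push_neg at hge
    set i := ρ.symm 0 with hidef
    set j := ρ.symm 1 with hjdef
    have hρi : ρ i = 0 := ρ.apply_symm_apply 0
    have hρj : ρ j = 1 := ρ.apply_symm_apply 1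
    have hi0 : i ≠ 0 := by
      intro h; rw [h] at hρi; rw [hρi] at hge; simp at hge
    have hj0 : j ≠ 0 := by
      intro h; rw [h] at hρj; rw [hρj, Fin.val_one] at hge; omega
    have hipos : (0 : Fin (m+2)) < i := Fin.pos_iff_ne_zero.mpr hi0
    have hjpos : (0 : Fin (m+2)) < j := Fin.pos_iff_ne_zero.mpr hj0
    have hij : i < j := by
      rcases lt_trichotomy i j with h | h | h
      · exact h
      · exfalso; rw [h, hρj] at hρi; exact absurd hρi (by
          intro hcon
          have := congrArg Fin.val hcon
          rw [Fin.val_one, Fin.val_zero] at this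
          omega)
      · exfalso
        have := step1 j i hjpos h
        rw [hρi, hρj] at this
        rw [Fin.lt_def, Fin.val_one, Fin.val_zero] at this
        omega
    apply h312 (contains312 ρ 0 i j hipos hij ?_ ?_)
    · rw [hρi, hρj, Fin.lt_def, Fin.val_one, Fin.val_zero]; omega
    · rw [hρj, Fin.lt_def, Fin.val_one]; omega
  rcases Nat.le_one_iff_eq_zero_or_eq_one.mp step2 with h0 | h0
  · left
    apply perm_sm
    intro a b hab
    rcases eq_or_ne a 0 with rfl | ha0
    · have hb0 : b ≠ 0 := ne_of_gt hab
      have : ρ b ≠ ρ 0 := fun h => hb0 (ρ.injective h)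
      have hρ0 : ρ 0 = 0 := Fin.ext h0
      rw [hρ0]
      exact Fin.pos_iff_ne_zero.mpr (by rw [← hρ0]; exact this)
    · exact step1 a b (Fin.pos_iff_ne_zero.mpr ha0) hab
  · right
    have hρ1 : ρ 1 = 0 := by
      set k := ρ.symm 0 with hkdef
      have hρk : ρ k = 0 := ρ.apply_symm_apply 0
      have hk0 : k ≠ 0 := by
        intro h; rw [h] at hρk
        rw [hρk] at h0; simp at h0
      have hk1 : k = 1 := by
        by_contra hk1
        have hgt : (1 : Fin (m+2)) < k := by
          rw [Fin.lt_def, Fin.val_one]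
          have := Fin.pos_iff_ne_zero.mpr hk0
          rw [Fin.lt_def, Fin.val_zero] at this
          rcases Nat.lt_or_ge 1 k.val with h | h
          · exact h
          · exfalso; apply hk1; apply Fin.ext; rw [Fin.val_one]; omega
        have := step1 1 k (by rw [Fin.lt_def, Fin.val_zero, Fin.val_one]; omega) hgt
        rw [hρk] at this
        exact absurd this (by simp)
      rw [← hk1, hρk]
    have key : ρ * Equiv.swap 0 1 = 1 := by
      apply perm_sm
      intro a b hab
      simp only [Equiv.Perm.mul_apply]
      rcases eq_or_ne a 0 with rfl | ha0
      · rw [Equiv.swap_apply_left, hρ1]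
        apply Fin.pos_iff_ne_zero.mpr
        intro hcon
        rcases eq_or_ne b 1 with rfl | hb1
        · rw [Equiv.swap_apply_right] at hcon
          rw [hcon] at h0; simp at h0
        · have hb0 : b ≠ 0 := ne_of_gt hab
          rw [Equiv.swap_apply_of_ne_of_ne hb0 hb1] at hcon
          have : b = 1 := ρ.injective (by rw [hcon, hρ1])
          exact hb1 this
      rcases eq_or_ne a 1 with rfl | ha1
      · have hb0 : b ≠ 0 := by
          intro h; rw [h] at hab
          exact absurd hab (by rw [Fin.lt_def, Fin.val_zero, Fin.val_one]; omega)
        have hb1 : b ≠ 1 := ne_of_gt hab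
        rw [Equiv.swap_apply_right, Equiv.swap_apply_of_ne_of_ne hb0 hb1]
        have hbρ0 : ρ b ≠ ρ 0 := fun h => hb0 (ρ.injective h)
        have hbρ1 : ρ b ≠ ρ 1 := fun h => hb1 (ρ.injective h)
        rw [hρ1] at hbρ1
        rw [Fin.lt_def, h0]
        have hv0 : (ρ b).val ≠ (ρ 0).val := fun h => hbρ0 (Fin.ext h)
        have hv1 : (ρ b).val ≠ 0 := fun h => hbρ1 (Fin.ext (by rw [h, Fin.val_zero]))
        rw [h0] at hv0
        omega
      · have ha2 : 2 ≤ a.val := by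
          have h1 : a.val ≠ 0 := fun h => ha0 (Fin.ext (by rw [h, Fin.val_zero]))
          have h2 : a.val ≠ 1 := fun h => ha1 (Fin.ext (by rw [h, Fin.val_one]))
          omega
        have hb0 : b ≠ 0 := by
          intro h; rw [h, Fin.lt_def, Fin.val_zero] at hab; omega
        have hb1 : b ≠ 1 := by
          intro h; rw [h, Fin.lt_def, Fin.val_one] at hab; omega
        rw [Equiv.swap_apply_of_ne_of_ne ha0 ha1, Equiv.swap_apply_of_ne_of_ne hb0 hb1]
        exact step1 a b (Fin.pos_iff_ne_zero.mpr ha0) hab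
    have := mul_eq_one_iff_eq_inv.mp key
    rw [this, Equiv.swap_inv]

theorem card_subtype_pi {n : ℕ} (S : Fin n → Finset (Fin n)) :
    Nat.card {f : Fin n → Fin n // ∀ c, f c ∈ S c} = ∏ c, (S c).card := by
  rw [Nat.card_congr (Equiv.subtypePiEquivPi (p := fun c x => x ∈ S c)), Nat.card_pi]
  exact Finset.prod_congr rfl fun c _ => Nat.card_eq_finsetCard (S c)

theorem cardA {n : ℕ} :
    Nat.card {f : Fin n → Fin n // ∀ c, f c ≤ c} = n.factorial := by
  have h1 : Nat.card {f : Fin n → Fin n // ∀ c, f c ∈ Finset.Iic c} = ∏ c : Fin n, (Finset.Iic c).card :=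
    card_subtype_pi _
  rw [Nat.card_congr (Equiv.subtypeEquivRight (q := fun f => ∀ c, f c ∈ Finset.Iic c)
    (fun f => by simp [Finset.mem_Iic]))]
  rw [h1]
  have h2 : ∀ c : Fin n, (Finset.Iic c).card = c.val + 1 := fun c => Fin.card_Iic c
  rw [Finset.prod_congr rfl fun c _ => h2 c]
  rw [← Finset.prod_range (fun i => i + 1), Finset.prod_range_add_one_eq_factorial]

def SB (m : ℕ) : Fin (m+2) → Finset (Fin (m+2)) :=
  fun c => if c.val = 0 then {1} else if c.val = 1 then {0} else Finset.Iic c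

theorem cardB {m : ℕ} :
    2 * Nat.card {f : Fin (m+2) → Fin (m+2) //
      f 0 = 1 ∧ f 1 = 0 ∧ ∀ c : Fin (m+2), 2 ≤ c.val → f c ≤ c} = (m+2).factorial := by
  have hiff : ∀ f : Fin (m+2) → Fin (m+2),
      (f 0 = 1 ∧ f 1 = 0 ∧ ∀ c : Fin (m+2), 2 ≤ c.val → f c ≤ c) ↔ ∀ c, f c ∈ SB m c := by
    intro f
    constructor
    · rintro ⟨h0, h1, h2⟩ c
      rcases Nat.lt_or_ge c.val 2 with hc | hc
      · rcases Nat.lt_or_ge c.val 1 with hc1 | hc1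
        · have hv : c.val = 0 := by omega
          have : c = 0 := by apply Fin.ext; simp [hv]
          subst this
          simp [SB, h0]
        · have hv : c.val = 1 := by omega
          have : c = 1 := by apply Fin.ext; simp [hv]
          subst this
          simp [SB, h1]
      · have hc0 : c.val ≠ 0 := by omega
        have hc1 : c.val ≠ 1 := by omega
        simp only [SB, if_neg hc0, if_neg hc1, Finset.mem_Iic]
        exact h2 c hc
    · intro h
      refine ⟨?_, ?_, ?_⟩
      · have := h 0
        simpa [SB] using this
      · have := h 1
        simpa [SB] using this
      · intro c hc
        have := h c
        have hc0 : c.val ≠ 0 := by omega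
        have hc1 : c.val ≠ 1 := by omega
        simpa only [SB, if_neg hc0, if_neg hc1, Finset.mem_Iic] using this
  rw [Nat.card_congr (Equiv.subtypeEquivRight hiff), card_subtype_pi]
  have hcard : ∀ c : Fin (m+2), (SB m c).card =
      if c.val = 0 then 1 else if c.val = 1 then 1 else c.val + 1 := by
    intro c
    by_cases h0 : c.val = 0
    · simp [SB, h0]
    by_cases h1 : c.val = 1
    · simp [SB, h0, h1]
    · simp [SB, h0, h1, Fin.card_Iic]
  rw [Finset.prod_congr rfl fun c _ => hcard c]
  rw [← Finset.prod_range (fun i => if i = 0 then 1 else if i = 1 then 1 else i + 1)]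
  rw [← Finset.prod_range_add_one_eq_factorial]
  have e : m + 2 = 2 + m := by omega
  rw [e, Finset.prod_range_add, Finset.prod_range_add]
  have h2 : ∀ x, (if 2 + x = 0 then 1 else if 2 + x = 1 then 1 else 2 + x + 1) = 2 + x + 1 :=
    fun x => by rw [if_neg (by omega), if_neg (by omega)]
  rw [Finset.prod_congr rfl fun x _ => h2 x]
  simp [Finset.prod_range_succ]

/-! ### Specializing Cond to the identity and the transposition -/

theorem cond_id_iff {n : ℕ} {f : Fin n → Fin n} : Cond f 1 ↔ ∀ c, f c ≤ c := by
  constructor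
  · intro h c; simpa [Equiv.Perm.one_symm] using (h c).1
  · intro h c
    refine ⟨by simpa [Equiv.Perm.one_symm] using h c, fun s hfs hsc => ?_⟩
    simpa [Equiv.Perm.one_symm] using hsc

theorem cond_swap_iff {m : ℕ} {f : Fin (m+2) → Fin (m+2)} :
    Cond f (Equiv.swap 0 1) ↔
      (f 0 = 1 ∧ f 1 = 0 ∧ ∀ c : Fin (m+2), 2 ≤ c.val → f c ≤ c) := by
  have v1 : (1 : Fin (m+2)).val = 1 := by simp
  have v0 : (0 : Fin (m+2)).val = 0 := rfl
  have hzo : (0 : Fin (m+2)) < 1 := by rw [Fin.lt_def, v1, v0]; omega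
  have hsymm : (Equiv.swap (0 : Fin (m+2)) 1).symm = Equiv.swap 0 1 := Equiv.symm_swap 0 1
  constructor
  · intro h
    have h1 : f 1 = 0 := by
      have := (h 1).1
      rw [hsymm, Equiv.swap_apply_right] at this
      exact Fin.le_zero_iff.mp this
    have h00 : f 0 ≤ 1 := by
      have := (h 0).1
      rwa [hsymm, Equiv.swap_apply_left] at this
    have h0 : f 0 = 1 := by
      rcases eq_or_ne (f 0) 0 with he | hne
      · exfalso
        have h2 := (h 0).2 0 (by rw [he]) (by rw [hsymm, Equiv.swap_apply_left]; exact hzo)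
        rw [Equiv.swap_apply_left] at h2
        exact absurd hzo (lt_asymm h2)
      · apply Fin.ext
        have hv : (f 0).val ≤ (1 : Fin (m+2)).val := h00
        rw [v1] at hv
        have hv0 : (f 0).val ≠ 0 := fun hcon => hne (Fin.ext (by rw [hcon, v0]))
        rw [v1]; omega
    refine ⟨h0, h1, fun c hc => ?_⟩
    have hc0 : c ≠ 0 := fun hcon => by rw [hcon, v0] at hc; omega
    have hc1 : c ≠ 1 := fun hcon => by rw [hcon, v1] at hc; omega
    have := (h c).1
    rwa [hsymm, Equiv.swap_apply_of_ne_of_ne hc0 hc1] at this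
  · rintro ⟨h0, h1, h2⟩ c
    rcases Nat.lt_or_ge c.val 2 with hc | hc
    · rcases Nat.lt_or_ge c.val 1 with hcv | hcv
      · have : c = 0 := Fin.ext (by rw [v0]; omega)
        subst this
        refine ⟨?_, ?_⟩
        · rw [hsymm, Equiv.swap_apply_left, h0]
        · intro s hfs hsc
          exfalso
          rw [hsymm, Equiv.swap_apply_left] at hsc
          rw [h0] at hfs
          exact absurd (lt_of_le_of_lt hfs hsc) (lt_irrefl _)
      · have : c = 1 := Fin.ext (by rw [v1]; omega)
        subst this
        refine ⟨?_, ?_⟩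
        · rw [hsymm, Equiv.swap_apply_right, h1]
        · intro s hfs hsc
          exfalso
          rw [hsymm, Equiv.swap_apply_right] at hsc
          exact absurd hsc (Fin.not_lt.mpr (Fin.zero_le s))
    · have hc0 : c ≠ 0 := fun hcon => by rw [hcon, v0] at hc; omega
      have hc1 : c ≠ 1 := fun hcon => by rw [hcon, v1] at hc; omega
      refine ⟨?_, ?_⟩
      · rw [hsymm, Equiv.swap_apply_of_ne_of_ne hc0 hc1]
        exact h2 c hc
      · intro s hfs hsc
        rw [hsymm, Equiv.swap_apply_of_ne_of_ne hc0 hc1] at hsc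
        have := swap01_lt hsc hc
        rwa [Equiv.swap_apply_of_ne_of_ne hc0 hc1] at this

/-! ### Parking-function property -/

theorem ipf_A {n : ℕ} {f : Fin n → Fin n} (h : ∀ c, f c ≤ c) : IsParkingFunction f := by
  intro i
  have hsub : Finset.Iic i ⊆ Finset.univ.filter fun j => f j ≤ i := by
    intro j hj
    rw [Finset.mem_Iic] at hj
    simp only [Finset.mem_filter, Finset.mem_univ, true_and]
    exact le_trans (h j) hj
  calc i.val + 1 = (Finset.Iic i).card := (Fin.card_Iic i).symm
    _ ≤ _ := Finset.card_le_card hsub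

theorem ipf_B {m : ℕ} {f : Fin (m+2) → Fin (m+2)} (h0 : f 0 = 1) (h1 : f 1 = 0)
    (h2 : ∀ c : Fin (m+2), 2 ≤ c.val → f c ≤ c) : IsParkingFunction f := by
  have v1 : (1 : Fin (m+2)).val = 1 := by simp
  have v0 : (0 : Fin (m+2)).val = 0 := rfl
  intro i
  rcases Nat.eq_zero_or_pos i.val with hi | hi
  · have hmem : (1 : Fin (m+2)) ∈ Finset.univ.filter fun j => f j ≤ i := by
      simp only [Finset.mem_filter, Finset.mem_univ, true_and]
      rw [h1]
      exact Fin.zero_le i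
    have := Finset.card_pos.mpr ⟨1, hmem⟩
    omega
  · have hsub : Finset.Iic i ⊆ Finset.univ.filter fun j => f j ≤ i := by
      intro j hj
      rw [Finset.mem_Iic] at hj
      simp only [Finset.mem_filter, Finset.mem_univ, true_and]
      rcases Nat.lt_or_ge j.val 2 with hj2 | hj2
      · rcases Nat.lt_or_ge j.val 1 with hj1 | hj1
        · have : j = 0 := Fin.ext (by rw [v0]; omega)
          rw [this, h0, Fin.le_def, v1]
          omega
        · have : j = 1 := Fin.ext (by rw [v1]; omega)
          rw [this, h1]
          exact Fin.zero_le i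
      · exact le_trans (h2 j hj2) hj
    calc i.val + 1 = (Finset.Iic i).card := (Fin.card_Iic i).symm
      _ ≤ _ := Finset.card_le_card hsub

/-! ### Avoidance of the four patterns -/

theorem id_avoidsAll {N : ℕ} : AvoidsAll (1 : Equiv.Perm (Fin N)) [p132, p231, p312, p321] := by
  intro σ hσ
  simp only [List.mem_cons, List.not_mem_nil, or_false] at hσ
  rcases hσ with rfl | rfl | rfl | rfl <;> exact id_avoids _ (by decide)

theorem tau_avoidsAll {m : ℕ} :
    AvoidsAll (Equiv.swap (0 : Fin (m+2)) 1) [p132, p231, p312, p321] := by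
  intro σ hσ
  simp only [List.mem_cons, List.not_mem_nil, or_false] at hσ
  rcases hσ with rfl | rfl | rfl | rfl <;> exact tau_avoids _ (by decide)

/-- For `n ≥ 2`, the number of parking functions of size `n` whose parking permutation
avoids 132, 231, 312 and 321 equals `(3/2)·n!`. -/
theorem stmt6 (n : ℕ) (hn : 2 ≤ n) :
    2 * pk n [p132, p231, p312, p321] = 3 * n.factorial := by
  obtain ⟨m, rfl⟩ : ∃ m, n = m + 2 := ⟨n - 2, by omega⟩
  rw [pk]
  have hiff : ∀ f : Fin (m+2) → Fin (m+2),
      (IsParkingFunction f ∧ ∃ ρ : Equiv.Perm (Fin (m+2)), IsParkingPerm f ρ ∧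
        AvoidsAll ρ [p132, p231, p312, p321]) ↔
      ((∀ c, f c ≤ c) ∨ (f 0 = 1 ∧ f 1 = 0 ∧ ∀ c : Fin (m+2), 2 ≤ c.val → f c ≤ c)) := by
    intro f
    constructor
    · rintro ⟨hpf, ρ, hperm, hav⟩
      rcases rho_cases ρ hav with rfl | rfl
      · exact Or.inl (cond_id_iff.mp (isParkingPerm_iff_cond.mp hperm))
      · exact Or.inr (cond_swap_iff.mp (isParkingPerm_iff_cond.mp hperm))
    · rintro (h | h)
      · exact ⟨ipf_A h, 1, isParkingPerm_iff_cond.mpr (cond_id_iff.mpr h), id_avoidsAll⟩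
      · exact ⟨ipf_B h.1 h.2.1 h.2.2, Equiv.swap 0 1,
          isParkingPerm_iff_cond.mpr (cond_swap_iff.mpr h), tau_avoidsAll⟩
  rw [Nat.card_congr (Equiv.subtypeEquivRight hiff)]
  classical
  have hdisj : Disjoint (fun f : Fin (m+2) → Fin (m+2) => ∀ c, f c ≤ c)
      (fun f => f 0 = 1 ∧ f 1 = 0 ∧ ∀ c : Fin (m+2), 2 ≤ c.val → f c ≤ c) := by
    rw [disjoint_iff_inf_le]
    rintro f ⟨hA, hB⟩
    have h00 : f 0 = 0 := Fin.le_zero_iff.mp (hA 0)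
    rw [hB.1] at h00
    have := congrArg Fin.val h00
    simp at this
  rw [Nat.card_congr (subtypeOrEquiv _ _ hdisj)]
  rw [Nat.card_sum]
  rw [Nat.mul_add]
  rw [cardA]
  rw [cardB]
  ring
end
end
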